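/- arXiv:2505.18295 — 2 statements merged into one kernel-verified Lean document; each statement's English description precedes it below -/
import Mathlib

section
/- Let b_n = |s^{-1}(Av_n(132,312))| be the number of permutations p of length n such that s(p) avoids both 132 and 312, with b_0 = 0. Then b_1 = 1 and, for every n ≥ 2, b_n = 2·b_{n-1} + 2·∑_{i=2}^{n-1} b_{i-1}·b_{n-i}. -/
/-- The stack-sorting map `s`, implemented with a fuel parameter (the fuel
`l.length` always suffices, since the maximum of a nonempty list of naturals is
attained, so both recursive calls are on strictly shorter lists).
`s(ε) = ε` and `s(LmR) = s(L) s(R) m` where `m` is the maximum entry. -/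
def stackSortAux : ℕ → List ℕ → List ℕ
  | 0, _ => []
  | _ + 1, [] => []
  | fuel + 1, a :: t =>
      let m := (a :: t).foldr max 0
      stackSortAux fuel ((a :: t).takeWhile (fun x => x ≠ m)) ++
        stackSortAux fuel (((a :: t).dropWhile (fun x => x ≠ m)).tail) ++ [m]

/-- The stack-sorting map on finite sequences of (distinct) naturals. -/
def stackSort (l : List ℕ) : List ℕ := stackSortAux l.length l

/-- `l` is a permutation of `{1, 2, …, n}`, written in one-line notation. -/
def IsPermList (n : ℕ) (l : List ℕ) : Prop :=
  l.Perm ((List.range n).map (· + 1))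

/-- The sequence `p` contains the pattern `q`: there is a strictly increasing choice
of positions of `p` on which the entries compare exactly as the entries of `q` do. -/
def ContainsPat (p q : List ℕ) : Prop :=
  ∃ f : Fin q.length → Fin p.length, StrictMono f ∧
    ∀ i j : Fin q.length, q.get i < q.get j ↔ p.get (f i) < p.get (f j)

/-- The sequence `p` avoids the pattern `q`. -/
def AvoidsPat (p q : List ℕ) : Prop := ¬ ContainsPat p q

/-- `b n = |s⁻¹(Av_n(132, 312))|`: the number of permutations `p` of length `n`
whose stack-sorted image avoids both `132` and `312`, with `b 0 = 0` by convention. -/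
noncomputable def b (n : ℕ) : ℕ :=
  if n = 0 then 0 else
    Nat.card {p : List ℕ // IsPermList n p ∧
      AvoidsPat (stackSort p) [1, 3, 2] ∧ AvoidsPat (stackSort p) [3, 1, 2]}


namespace SP
open List

open List

lemma mx_mem {l : List ℕ} (h : l ≠ []) : l.foldr max 0 ∈ l := by
  induction l with
  | nil => simp at h
  | cons a t ih =>
    rcases eq_or_ne t [] with rfl | ht
    · simp
    · have h1 := ih ht
      have : (a :: t).foldr max 0 = max a (t.foldr max 0) := rfl
      rw [this]
      rcases Nat.le_total a (t.foldr max 0) with h2 | h2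
      · rw [Nat.max_eq_right h2]; exact mem_cons_of_mem _ h1
      · rw [Nat.max_eq_left h2]; exact mem_cons_self

lemma le_mx {l : List ℕ} {x : ℕ} (h : x ∈ l) : x ≤ l.foldr max 0 := by
  induction l with
  | nil => simp at h
  | cons a t ih =>
    have hc : (a :: t).foldr max 0 = max a (t.foldr max 0) := rfl
    rcases mem_cons.1 h with rfl | h1
    · rw [hc]; exact Nat.le_max_left _ _
    · rw [hc]; exact le_trans (ih h1) (Nat.le_max_right _ _)

lemma dropWhile_ne_nil' {p : ℕ → Bool} {l : List ℕ} {x : ℕ} (hx : x ∈ l)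
    (hpx : p x = false) : l.dropWhile p ≠ [] := by
  intro hc
  have := (dropWhile_eq_nil_iff).1 hc x hx
  rw [hpx] at this; exact Bool.false_ne_true this

lemma len_take_drop (p : ℕ → Bool) (l : List ℕ) :
    (l.takeWhile p).length + (l.dropWhile p).length = l.length := by
  rw [← length_append, takeWhile_append_dropWhile]

lemma mx_pred_false (l : List ℕ) :
    (fun x => decide (x ≠ l.foldr max 0)) (l.foldr max 0) = false := by simp

lemma sAux_eq : ∀ fuel (l : List ℕ), l.length ≤ fuel → stackSortAux fuel l = stackSort l := by
  intro fuel
  induction fuel using Nat.strong_induction_on with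
  | _ fuel ih =>
    intro l hl
    match fuel, l with
    | 0, [] => rfl
    | f+1, [] => rfl
    | f+1, a :: t =>
      have hmem : (a::t).foldr max 0 ∈ a :: t := mx_mem (by simp)
      have hdw : (a::t).dropWhile (fun x => x ≠ (a::t).foldr max 0) ≠ [] :=
        dropWhile_ne_nil' hmem (by simp)
      have hlen := len_take_drop (fun x => decide (x ≠ (a::t).foldr max 0)) (a::t)
      have hdl : 0 < ((a::t).dropWhile (fun x => decide (x ≠ (a::t).foldr max 0))).length :=
        length_pos_iff.2 hdw
      have hT : ((a::t).takeWhile (fun x => decide (x ≠ (a::t).foldr max 0))).length < (a::t).length := by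
        simp only [length_cons] at *; omega
      have hD : (((a::t).dropWhile (fun x => decide (x ≠ (a::t).foldr max 0))).tail).length < (a::t).length := by
        rw [length_tail]; simp only [length_cons] at *; omega
      simp only [length_cons] at hl hT hD
      show stackSortAux (f+1) (a::t) = stackSortAux (t.length + 1) (a::t)
      simp only [stackSortAux]
      rw [ih f (by omega) _ (by omega), ih f (by omega) _ (by omega),
          ih t.length (by omega) _ (by omega), ih t.length (by omega) _ (by omega)]

lemma s_cons (a : ℕ) (t : List ℕ) :
    stackSort (a :: t) = stackSort ((a::t).takeWhile (fun x => x ≠ (a::t).foldr max 0)) ++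
      stackSort (((a::t).dropWhile (fun x => x ≠ (a::t).foldr max 0)).tail) ++ [(a::t).foldr max 0] := by
  have hmem : (a::t).foldr max 0 ∈ a :: t := mx_mem (by simp)
  have hdw : (a::t).dropWhile (fun x => x ≠ (a::t).foldr max 0) ≠ [] :=
    dropWhile_ne_nil' hmem (by simp)
  have hlen := len_take_drop (fun x => decide (x ≠ (a::t).foldr max 0)) (a::t)
  have hdl : 0 < ((a::t).dropWhile (fun x => decide (x ≠ (a::t).foldr max 0))).length :=
    length_pos_iff.2 hdw
  show stackSortAux (t.length + 1) (a::t) = _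
  simp only [stackSortAux]
  rw [sAux_eq t.length _ (by simp only [length_cons] at *; omega),
      sAux_eq t.length _ (by rw [length_tail]; simp only [length_cons] at *; omega)]

lemma s_ne_nil {l : List ℕ} (h : l ≠ []) :
    stackSort l = stackSort (l.takeWhile (fun x => x ≠ l.foldr max 0)) ++
      stackSort ((l.dropWhile (fun x => x ≠ l.foldr max 0)).tail) ++ [l.foldr max 0] := by
  obtain ⟨a, t, rfl⟩ := exists_cons_of_ne_nil h
  exact s_cons a t

lemma mx_split {L R : List ℕ} {x : ℕ} (hall : ∀ y ∈ L ++ x :: R, y ≤ x) :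
    (L ++ x :: R).foldr max 0 = x := by
  have h1 : x ∈ L ++ x :: R := by simp
  exact Nat.le_antisymm (hall _ (mx_mem (by simp))) (le_mx h1)

lemma take_split {L R : List ℕ} {x : ℕ} (hL : ∀ y ∈ L, y ≠ x) :
    (L ++ x :: R).takeWhile (fun y => y ≠ x) = L := by
  induction L with
  | nil => simp
  | cons a t ih =>
    have ha : a ≠ x := hL a (by simp)
    simp only [cons_append, takeWhile_cons]
    rw [if_pos (by simpa using ha), ih (fun y hy => hL y (by simp [hy]))]

lemma drop_split {L R : List ℕ} {x : ℕ} (hL : ∀ y ∈ L, y ≠ x) :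
    (L ++ x :: R).dropWhile (fun y => y ≠ x) = x :: R := by
  induction L with
  | nil => simp
  | cons a t ih =>
    have ha : a ≠ x := hL a (by simp)
    simp only [cons_append, dropWhile_cons]
    rw [if_pos (by simpa using ha), ih (fun y hy => hL y (by simp [hy]))]

lemma s_nil : stackSort [] = [] := rfl

lemma s_split {L R : List ℕ} {x : ℕ} (hL : ∀ y ∈ L, y ≠ x)
    (hall : ∀ y ∈ L ++ x :: R, y ≤ x) :
    stackSort (L ++ x :: R) = stackSort L ++ stackSort R ++ [x] := by
  have hm := mx_split hall
  rw [s_ne_nil (by simp), hm, take_split hL, drop_split hL, tail_cons]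

lemma s_perm (l : List ℕ) : stackSort l ~ l := by
  suffices h : ∀ n (l : List ℕ), l.length ≤ n → stackSort l ~ l from h l.length l le_rfl
  intro n
  induction n using Nat.strong_induction_on with
  | _ n ih =>
    intro l hln
    rcases eq_or_ne l [] with rfl | h
    · simp [s_nil]
    · have hs := s_ne_nil h
      set m := l.foldr max 0 with hm
      set T := l.takeWhile (fun x => x ≠ m) with hT
      set D := l.dropWhile (fun x => x ≠ m) with hD
      have hTD : T ++ D = l := takeWhile_append_dropWhile
      have hDne : D ≠ [] := by
        intro hc
        have := (dropWhile_eq_nil_iff).1 (hD ▸ hc) m (mx_mem h)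
        simp at this
      have hhead : D.head hDne = m := by
        have := head_dropWhile_not (fun x => decide (x ≠ m)) (l := l) (hD ▸ hDne)
        simpa [hD] using this
      have hDeq : D = m :: D.tail := by
        rw [← hhead]; exact (cons_head_tail hDne).symm
      have hlen : T.length + D.length = l.length := by rw [← length_append, hTD]
      have hDlen : 0 < D.length := length_pos_iff.2 hDne
      have hn1 : 1 ≤ n := by
        have := length_pos_iff.2 h; omega
      have h1 : stackSort T ~ T := ih (n-1) (by omega) T (by omega)
      have h2 : stackSort D.tail ~ D.tail := by
        refine ih (n-1) (by omega) _ ?_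
        rw [length_tail]; omega
      rw [hs]
      calc stackSort T ++ stackSort D.tail ++ [m]
          ~ T ++ (D.tail ++ [m]) := by
            rw [append_assoc]
            exact h1.append (h2.append (Perm.refl _))
        _ ~ T ++ (m :: D.tail) := (Perm.refl T).append (perm_append_singleton _ _)
        _ = l := by rw [← hDeq, hTD]


open List

lemma mx_map {φ : ℕ → ℕ} (hφ : StrictMono φ) {l : List ℕ} (h : l ≠ []) :
    (l.map φ).foldr max 0 = φ (l.foldr max 0) := by
  have hm : l.map φ ≠ [] := by simpa using h
  refine Nat.le_antisymm ?_ (le_mx (mem_map_of_mem (f := φ) (mx_mem h)))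
  obtain ⟨y, hy, he⟩ := mem_map.1 (mx_mem hm)
  rw [← he]
  exact hφ.monotone (le_mx hy)

lemma s_map {φ : ℕ → ℕ} (hφ : StrictMono φ) (l : List ℕ) :
    stackSort (l.map φ) = (stackSort l).map φ := by
  suffices h : ∀ n (l : List ℕ), l.length ≤ n → stackSort (l.map φ) = (stackSort l).map φ from
    h l.length l le_rfl
  intro n
  induction n using Nat.strong_induction_on with
  | _ n ih =>
    intro l hln
    rcases eq_or_ne l [] with rfl | h
    · simp [s_nil]
    · have hm : l.map φ ≠ [] := by simpa using h
      rw [s_ne_nil h, s_ne_nil hm, mx_map hφ h]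
      set M := l.foldr max 0 with hM
      have hpred : (fun x => decide (x ≠ φ M)) ∘ φ = fun x => decide (x ≠ M) := by
        funext x
        simp [Function.comp, hφ.injective.ne_iff]
      have htake : (l.map φ).takeWhile (fun x => x ≠ φ M) = (l.takeWhile (fun x => x ≠ M)).map φ := by
        rw [takeWhile_map, hpred]
      have hdrop : (l.map φ).dropWhile (fun x => x ≠ φ M) = (l.dropWhile (fun x => x ≠ M)).map φ := by
        rw [dropWhile_map, hpred]
      have hDne : l.dropWhile (fun x => x ≠ M) ≠ [] := by
        intro hc
        have := (dropWhile_eq_nil_iff).1 hc M (mx_mem h)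
        simp at this
      have hlen : (l.takeWhile (fun x => decide (x ≠ M))).length
          + (l.dropWhile (fun x => decide (x ≠ M))).length = l.length := by
        rw [← length_append, takeWhile_append_dropWhile]
      have hDlen : 0 < (l.dropWhile (fun x => decide (x ≠ M))).length := length_pos_iff.2 hDne
      have hn1 : 1 ≤ n := by have := length_pos_iff.2 h; omega
      rw [htake, hdrop, ← List.map_tail]
      rw [ih (n-1) (by omega) _ (by omega),
          ih (n-1) (by omega) _ (by rw [length_tail]; omega)]
      simp [map_append]


def Zig (w : List ℕ) : Prop := ∀ i i' j : ℕ, i < j → i' < j → j < w.length →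
  ¬(w.getD i 0 < w.getD j 0 ∧ w.getD j 0 < w.getD i' 0)

def Lows (a : ℕ) (w : List ℕ) : Prop := ∀ i j : ℕ, i < j → j < w.length →
  w.getD i 0 ≤ a → w.getD j 0 ≤ a → w.getD j 0 < w.getD i 0

def Highs (a : ℕ) (w : List ℕ) : Prop := ∀ i j : ℕ, i < j → j < w.length →
  a < w.getD i 0 → a < w.getD j 0 → w.getD i 0 < w.getD j 0

lemma getD_nodup_ne {w : List ℕ} (hnd : w.Nodup) {i j : ℕ} (hij : i ≠ j)
    (hi : i < w.length) (hj : j < w.length) : w.getD i 0 ≠ w.getD j 0 := by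
  rw [getD_eq_getElem _ _ hi, getD_eq_getElem _ _ hj]
  intro h
  exact hij ((hnd.getElem_inj_iff).1 h)

lemma getD_mem' {w : List ℕ} {j : ℕ} (hj : j < w.length) : w.getD j 0 ∈ w := by
  rw [getD_eq_getElem _ _ hj]; exact getElem_mem hj

lemma mem_index {w : List ℕ} {x : ℕ} (hx : x ∈ w) :
    ∃ j, ∃ _ : j < w.length, w.getD j 0 = x := by
  obtain ⟨j, hj, he⟩ := mem_iff_getElem.1 hx
  exact ⟨j, hj, by rw [getD_eq_getElem _ _ hj]; exact he⟩

/-- Pattern containment of 132 gives a Zig violation -/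
lemma not_zig_of_132 {w : List ℕ} (h : ContainsPat w [1,3,2]) : ¬ Zig w := by
  obtain ⟨f, hf, hiff⟩ := h
  intro hz
  have l02 := (hiff ⟨0, by simp⟩ ⟨2, by simp⟩).1 (by simp)
  have l21 := (hiff ⟨2, by simp⟩ ⟨1, by simp⟩).1 (by simp)
  have h02 : f ⟨0, by simp⟩ < f ⟨2, by simp⟩ := hf (by simp [Fin.lt_def])
  have h12 : f ⟨1, by simp⟩ < f ⟨2, by simp⟩ := hf (by simp [Fin.lt_def])
  refine hz (f ⟨0, by simp⟩) (f ⟨1, by simp⟩) (f ⟨2, by simp⟩) h02 h12 (f _).isLt ⟨?_, ?_⟩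
  · rw [getD_eq_getElem _ _ (f _).isLt, getD_eq_getElem _ _ (f _).isLt]
    simpa [List.get] using l02
  · rw [getD_eq_getElem _ _ (f _).isLt, getD_eq_getElem _ _ (f _).isLt]
    simpa [List.get] using l21

lemma not_zig_of_312 {w : List ℕ} (h : ContainsPat w [3,1,2]) : ¬ Zig w := by
  obtain ⟨f, hf, hiff⟩ := h
  intro hz
  have l12 := (hiff ⟨1, by simp⟩ ⟨2, by simp⟩).1 (by simp)
  have l20 := (hiff ⟨2, by simp⟩ ⟨0, by simp⟩).1 (by simp)
  have h02 : f ⟨0, by simp⟩ < f ⟨2, by simp⟩ := hf (by simp [Fin.lt_def])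
  have h12 : f ⟨1, by simp⟩ < f ⟨2, by simp⟩ := hf (by simp [Fin.lt_def])
  refine hz (f ⟨1, by simp⟩) (f ⟨0, by simp⟩) (f ⟨2, by simp⟩) h12 h02 (f _).isLt ⟨?_, ?_⟩
  · rw [getD_eq_getElem _ _ (f _).isLt, getD_eq_getElem _ _ (f _).isLt]
    simpa [List.get] using l12
  · rw [getD_eq_getElem _ _ (f _).isLt, getD_eq_getElem _ _ (f _).isLt]
    simpa [List.get] using l20

lemma contains_of_not_zig {w : List ℕ} (h : ¬ Zig w) :
    ContainsPat w [1,3,2] ∨ ContainsPat w [3,1,2] := by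
  simp only [Zig, not_forall] at h
  obtain ⟨i, i', j, hij, hi'j, hj, hval⟩ := h
  rw [not_not] at hval
  obtain ⟨h1, h2⟩ := hval
  have hi : i < w.length := lt_trans hij hj
  have hi' : i' < w.length := lt_trans hi'j hj
  have hii' : i ≠ i' := by
    intro he; subst he; exact absurd (lt_trans h1 h2) (lt_irrefl _)
  rcases Nat.lt_or_ge i i' with hlt | hge
  · left
    refine ⟨fun a => if a = ⟨0, by simp⟩ then ⟨i, hi⟩ else if a = ⟨1, by simp⟩ then ⟨i', hi'⟩ else ⟨j, hj⟩, ?_, ?_⟩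
    · intro a b hab
      fin_cases a <;> fin_cases b <;> simp_all [Fin.lt_def] <;> omega
    · intro a b
      have e1 : w.get ⟨i, hi⟩ = w.getD i 0 := (getD_eq_getElem _ _ hi).symm
      have e2 : w.get ⟨i', hi'⟩ = w.getD i' 0 := (getD_eq_getElem _ _ hi').symm
      have e3 : w.get ⟨j, hj⟩ = w.getD j 0 := (getD_eq_getElem _ _ hj).symm
      fin_cases a <;> fin_cases b <;>
        simp only [List.get, if_true, if_false] <;>
        simp_all <;> omega
  · right
    have hlt : i' < i := lt_of_le_of_ne hge (Ne.symm hii')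
    refine ⟨fun a => if a = ⟨0, by simp⟩ then ⟨i', hi'⟩ else if a = ⟨1, by simp⟩ then ⟨i, hi⟩ else ⟨j, hj⟩, ?_, ?_⟩
    · intro a b hab
      fin_cases a <;> fin_cases b <;> simp_all [Fin.lt_def] <;> omega
    · intro a b
      have e1 : w.get ⟨i, hi⟩ = w.getD i 0 := (getD_eq_getElem _ _ hi).symm
      have e2 : w.get ⟨i', hi'⟩ = w.getD i' 0 := (getD_eq_getElem _ _ hi').symm
      have e3 : w.get ⟨j, hj⟩ = w.getD j 0 := (getD_eq_getElem _ _ hj).symm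
      fin_cases a <;> fin_cases b <;>
        simp only [List.get, if_true, if_false] <;>
        simp_all <;> omega

lemma avoids_iff_zig (w : List ℕ) :
    (AvoidsPat w [1,3,2] ∧ AvoidsPat w [3,1,2]) ↔ Zig w := by
  constructor
  · rintro ⟨h1, h2⟩
    by_contra hz
    rcases contains_of_not_zig hz with h | h
    · exact h1 h
    · exact h2 h
  · intro hz
    exact ⟨fun h => not_zig_of_132 h hz, fun h => not_zig_of_312 h hz⟩


lemma zig_of_cond {a : ℕ} {w : List ℕ} (hl : Lows a w) (hh : Highs a w) : Zig w := by
  intro i i' j hij hi'j hj ⟨h1, h2⟩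
  by_cases hja : w.getD j 0 ≤ a
  · exact absurd (hl i j hij hj (le_of_lt (lt_of_lt_of_le h1 hja)) hja) (by omega)
  · push_neg at hja
    exact absurd (hh i' j hi'j hj (lt_trans hja h2) hja) (by omega)

lemma cond_of_zig {a : ℕ} {w : List ℕ} (hz : Zig w) (hnd : w.Nodup) (hne : w ≠ [])
    (ha : a + 1 = w.getD 0 0 ∨ a = w.getD 0 0) : Lows a w ∧ Highs a w := by
  have hlen : 0 < w.length := length_pos_iff.2 hne
  constructor
  · intro i j hij hj hia hja
    by_contra hc
    push_neg at hc
    have hne' : w.getD i 0 ≠ w.getD j 0 :=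
      getD_nodup_ne hnd (by omega) (by omega) hj
    have h1 : w.getD i 0 < w.getD j 0 := by omega
    have hj0 : w.getD j 0 ≠ w.getD 0 0 := by
      rcases eq_or_ne j 0 with rfl | hj0
      · omega
      · exact getD_nodup_ne hnd hj0 hj hlen
    have h2 : w.getD j 0 < w.getD 0 0 := by omega
    exact hz i 0 j hij (by omega) hj ⟨h1, h2⟩
  · intro i j hij hj hia hja
    by_contra hc
    push_neg at hc
    have hne' : w.getD i 0 ≠ w.getD j 0 :=
      getD_nodup_ne hnd (by omega) (by omega) hj
    have h2 : w.getD j 0 < w.getD i 0 := by omega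
    rcases eq_or_ne i 0 with rfl | hi0
    · omega
    · have hj0 : w.getD j 0 ≠ w.getD 0 0 := by
        rcases eq_or_ne j 0 with rfl | hj0
        · omega
        · exact getD_nodup_ne hnd hj0 hj hlen
      have hi00 : w.getD i 0 ≠ w.getD 0 0 := getD_nodup_ne hnd hi0 (by omega) hlen
      have h1 : w.getD 0 0 < w.getD j 0 := by
        rcases ha with ha | ha
        · omega
        · omega
      exact hz 0 i j (by omega) hij hj ⟨h1, h2⟩

lemma threshold_eq {a m : ℕ} {w : List ℕ} (hnd : w.Nodup) (hne : w ≠ [])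
    (hw : ∀ x, x ∈ w ↔ 1 ≤ x ∧ x ≤ m) (ham : a ≤ m)
    (hl : Lows a w) (hh : Highs a w) : a + 1 = w.getD 0 0 ∨ a = w.getD 0 0 := by
  have hlen : 0 < w.length := length_pos_iff.2 hne
  set h := w.getD 0 0 with hh0
  have hhw : h ∈ w := getD_mem' hlen
  have hhb := (hw h).1 hhw
  by_contra hc
  push_neg at hc
  rcases Nat.lt_or_ge (a+1) h with hlt | hge
  · -- a + 2 ≤ h : the value h-1 gives a Highs violation
    have hmem : h - 1 ∈ w := (hw _).2 ⟨by omega, by omega⟩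
    obtain ⟨j, hj, hje⟩ := mem_index hmem
    have hj0 : j ≠ 0 := by intro h0; rw [h0] at hje; omega
    have := hh 0 j (by omega) hj (by omega) (by omega)
    omega
  · -- a > h : the value a gives a Lows violation
    have hah : h < a := by omega
    have hmem : a ∈ w := (hw _).2 ⟨by omega, ham⟩
    obtain ⟨j, hj, hje⟩ := mem_index hmem
    have hj0 : j ≠ 0 := by intro h0; rw [h0] at hje; omega
    have := hl 0 j (by omega) hj (by omega) (by omega)
    omega

lemma zig_prefix {u v : List ℕ} (hz : Zig (u ++ v)) : Zig u := by
  intro i i' j hij hi'j hj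
  have := hz i i' j hij hi'j (by rw [length_append]; omega)
  rwa [getD_append u v 0 i (by omega), getD_append u v 0 i' (by omega),
    getD_append u v 0 j hj] at this

lemma zig_append_end {u : List ℕ} {c : ℕ} (hc : ∀ x ∈ u, x < c) :
    Zig (u ++ [c]) ↔ Zig u := by
  constructor
  · exact zig_prefix
  · intro hz i i' j hij hi'j hj
    rw [length_append, length_singleton] at hj
    rcases Nat.lt_or_ge j u.length with hju | hju
    · rw [getD_append u [c] 0 i (by omega), getD_append u [c] 0 i' (by omega),
        getD_append u [c] 0 j hju]
      exact hz i i' j hij hi'j hju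
    · have hje : j = u.length := by omega
      rw [hje, getD_append_right u [c] 0 u.length (le_refl _), Nat.sub_self,
        getD_append u [c] 0 i (by omega), getD_append u [c] 0 i' (by omega)]
      simp only [getD_cons_zero]
      intro ⟨h1, h2⟩
      have hmem : u.getD i' 0 ∈ u := getD_mem' (by omega)
      have := hc _ hmem
      omega

lemma zig_out {u v : List ℕ} (hz : Zig (u ++ v)) {j : ℕ} (hj : j < v.length)
    {y z : ℕ} (hy : y ∈ u) (hzz : z ∈ u) (h1 : y < v.getD j 0) (h2 : v.getD j 0 < z) :
    False := by
  obtain ⟨iy, hiy, hye⟩ := mem_index hy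
  obtain ⟨iz, hiz, hze⟩ := mem_index hzz
  refine hz iy iz (u.length + j) (by omega) (by omega) (by rw [length_append]; omega) ⟨?_, ?_⟩
  · rw [getD_append u v 0 iy hiy, getD_append_right u v 0 (u.length + j) (by omega), hye]
    simpa [Nat.add_sub_cancel_left] using h1
  · rw [getD_append u v 0 iz hiz, getD_append_right u v 0 (u.length + j) (by omega), hze]
    simpa [Nat.add_sub_cancel_left] using h2

lemma zig_glue {u v : List ℕ} {a c : ℕ} (hu : Zig u) (hac : a ≤ c)
    (hb : ∀ x ∈ u, a < x ∧ x ≤ c) (hv : ∀ x ∈ v, x ≤ a ∨ c < x)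
    (hl : Lows a v) (hh : Highs a v) : Zig (u ++ v) := by
  intro i i' j hij hi'j hj
  rw [length_append] at hj
  rcases Nat.lt_or_ge j u.length with hju | hju
  · rw [getD_append u v 0 i (by omega), getD_append u v 0 i' (by omega),
      getD_append u v 0 j hju]
    exact hu i i' j hij hi'j hju
  · obtain ⟨j', rfl⟩ : ∃ j', j = u.length + j' := ⟨j - u.length, by omega⟩
    have hj' : j' < v.length := by omega
    rw [getD_append_right u v 0 (u.length + j') (by omega), Nat.add_sub_cancel_left]
    intro ⟨h1, h2⟩
    have hjmem : v.getD j' 0 ∈ v := getD_mem' hj'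
    rcases hv _ hjmem with hlow | hhigh
    · -- the j entry is low; then i must be in v and low, Lows is violated
      rcases Nat.lt_or_ge i u.length with hiu | hiu
      · rw [getD_append u v 0 i hiu] at h1
        have := hb _ (getD_mem' hiu)
        omega
      · obtain ⟨i2, rfl⟩ : ∃ i2, i = u.length + i2 := ⟨i - u.length, by omega⟩
        rw [getD_append_right u v 0 (u.length + i2) (by omega), Nat.add_sub_cancel_left] at h1
        have := hl i2 j' (by omega) hj' (by omega) hlow
        omega
    · -- the j entry is high; then i' must be in v and high, Highs is violated
      rcases Nat.lt_or_ge i' u.length with hiu | hiu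
      · rw [getD_append u v 0 i' hiu] at h2
        have := hb _ (getD_mem' hiu)
        omega
      · obtain ⟨i2, rfl⟩ : ∃ i2, i' = u.length + i2 := ⟨i' - u.length, by omega⟩
        rw [getD_append_right u v 0 (u.length + i2) (by omega), Nat.add_sub_cancel_left] at h2
        have := hh i2 j' (by omega) hj' (by omega) (by omega)
        omega

lemma getD_map {φ : ℕ → ℕ} {w : List ℕ} {i : ℕ} (hi : i < w.length) :
    (w.map φ).getD i 0 = φ (w.getD i 0) := by
  rw [getD_eq_getElem _ _ (by simpa using hi), getD_eq_getElem _ _ hi, getElem_map]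

lemma zig_map_iff {φ : ℕ → ℕ} (hφ : StrictMono φ) {w : List ℕ} :
    Zig (w.map φ) ↔ Zig w := by
  constructor
  · intro hz i i' j hij hi'j hj ⟨h1, h2⟩
    refine hz i i' j hij hi'j (by simpa using hj) ⟨?_, ?_⟩
    · rw [getD_map (i := i) (by omega), getD_map (i := j) hj]; exact hφ h1
    · rw [getD_map (i := i') (by omega), getD_map (i := j) hj]; exact hφ h2
  · intro hz i i' j hij hi'j hj ⟨h1, h2⟩
    rw [length_map] at hj
    rw [getD_map (i := i) (by omega), getD_map (i := j) hj] at h1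
    rw [getD_map (i := i') (by omega), getD_map (i := j) hj] at h2
    exact hz i i' j hij hi'j hj ⟨hφ.lt_iff_lt.1 h1, hφ.lt_iff_lt.1 h2⟩

lemma lows_map_iff {φ : ℕ → ℕ} (hφ : StrictMono φ) {a : ℕ}
    (hfa : ∀ x, φ x ≤ a ↔ x ≤ a) {w : List ℕ} :
    Lows a (w.map φ) ↔ Lows a w := by
  constructor
  · intro hl i j hij hj hia hja
    have := hl i j hij (by simpa using hj)
      (by rw [getD_map (i := i) (by omega)]; exact (hfa _).2 hia)
      (by rw [getD_map (i := j) hj]; exact (hfa _).2 hja)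
    rw [getD_map (i := i) (by omega), getD_map (i := j) hj] at this
    exact hφ.lt_iff_lt.1 this
  · intro hl i j hij hj hia hja
    rw [length_map] at hj
    rw [getD_map (i := i) (by omega)] at hia
    rw [getD_map (i := j) hj] at hja
    rw [getD_map (i := i) (by omega), getD_map (i := j) hj]
    exact hφ ((hl i j hij hj ((hfa _).1 hia) ((hfa _).1 hja)))

lemma highs_map_iff {φ : ℕ → ℕ} (hφ : StrictMono φ) {a : ℕ}
    (hfa : ∀ x, φ x ≤ a ↔ x ≤ a) {w : List ℕ} :
    Highs a (w.map φ) ↔ Highs a w := by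
  have hfa' : ∀ x, a < φ x ↔ a < x := by
    intro x
    rw [← Nat.not_le, ← Nat.not_le, not_iff_not]
    exact hfa x
  constructor
  · intro hl i j hij hj hia hja
    have := hl i j hij (by simpa using hj)
      (by rw [getD_map (i := i) (by omega)]; exact (hfa' _).2 hia)
      (by rw [getD_map (i := j) hj]; exact (hfa' _).2 hja)
    rw [getD_map (i := i) (by omega), getD_map (i := j) hj] at this
    exact hφ.lt_iff_lt.1 this
  · intro hl i j hij hj hia hja
    rw [length_map] at hj
    rw [getD_map (i := i) (by omega)] at hia
    rw [getD_map (i := j) hj] at hja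
    rw [getD_map (i := i) (by omega), getD_map (i := j) hj]
    exact hφ ((hl i j hij hj ((hfa' _).1 hia) ((hfa' _).1 hja)))




lemma foldr_min_le {l : List ℕ} {c x : ℕ} (h : x ∈ l) : l.foldr min c ≤ x := by
  induction l with
  | nil => simp at h
  | cons a t ih =>
    have hc : (a :: t).foldr min c = min a (t.foldr min c) := rfl
    rcases mem_cons.1 h with rfl | h1
    · rw [hc]; exact Nat.min_le_left _ _
    · rw [hc]; exact le_trans (Nat.min_le_right _ _) (ih h1)

lemma foldr_min_mem {l : List ℕ} {c : ℕ} : l.foldr min c = c ∨ l.foldr min c ∈ l := by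
  induction l with
  | nil => left; rfl
  | cons a t ih =>
    have hc : (a :: t).foldr min c = min a (t.foldr min c) := rfl
    rcases Nat.le_total a (t.foldr min c) with h1 | h1
    · right; rw [hc, Nat.min_eq_left h1]; exact mem_cons_self
    · rw [hc, Nat.min_eq_right h1]
      rcases ih with h | h
      · left; exact h
      · right; exact mem_cons_of_mem _ h

/-! ### base list and permutation finsets -/

def bl (n : ℕ) : List ℕ := (List.range n).map (· + 1)

lemma bl_length (n : ℕ) : (bl n).length = n := by simp [bl]

lemma bl_nodup (n : ℕ) : (bl n).Nodup :=
  (List.nodup_range (n := n)).map (fun a b => by omega)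

lemma mem_bl {n x : ℕ} : x ∈ bl n ↔ 1 ≤ x ∧ x ≤ n := by
  simp only [bl, mem_map, mem_range]
  constructor
  · rintro ⟨y, hy, rfl⟩; omega
  · rintro ⟨h1, h2⟩; exact ⟨x - 1, by omega, by omega⟩

lemma bl_succ (n : ℕ) : bl (n+1) = bl n ++ [n+1] := by
  simp [bl, List.range_succ]

def permsF (n : ℕ) : Finset (List ℕ) :=
  ⟨((bl n).permutations : Multiset (List ℕ)), by
    exact Multiset.coe_nodup.2 (nodup_permutations _ (bl_nodup n))⟩

lemma mem_permsF {n : ℕ} {p : List ℕ} : p ∈ permsF n ↔ p ~ bl n := by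
  show p ∈ ((bl n).permutations : Multiset (List ℕ)) ↔ _
  rw [Multiset.mem_coe, mem_permutations]

noncomputable def GoodF (n : ℕ) : Finset (List ℕ) :=
  @Finset.filter _ (fun p => Zig (stackSort p)) (Classical.decPred _) (permsF n)

lemma mem_GoodF {n : ℕ} {p : List ℕ} : p ∈ GoodF n ↔ p ~ bl n ∧ Zig (stackSort p) := by
  unfold GoodF
  rw [@Finset.mem_filter _ _ (Classical.decPred _), mem_permsF]

noncomputable def CondF (m a : ℕ) : Finset (List ℕ) :=
  @Finset.filter _ (fun p => Lows a (stackSort p) ∧ Highs a (stackSort p))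
    (Classical.decPred _) (permsF m)

lemma mem_CondF {m a : ℕ} {p : List ℕ} :
    p ∈ CondF m a ↔ p ~ bl m ∧ Lows a (stackSort p) ∧ Highs a (stackSort p) := by
  unfold CondF
  rw [@Finset.mem_filter _ _ (Classical.decPred _), mem_permsF]

lemma b_eq {n : ℕ} (h : n ≠ 0) : b n = (GoodF n).card := by
  rw [b, if_neg h]
  have hset : {p : List ℕ | IsPermList n p ∧
      AvoidsPat (stackSort p) [1, 3, 2] ∧ AvoidsPat (stackSort p) [3, 1, 2]}
      = (GoodF n : Set (List ℕ)) := by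
    ext p
    simp only [Set.mem_setOf_eq, Finset.coe_filter, mem_GoodF, Finset.mem_coe]
    rw [← avoids_iff_zig]
    exact and_congr_left' Iff.rfl
  calc Nat.card {p : List ℕ // IsPermList n p ∧
      AvoidsPat (stackSort p) [1, 3, 2] ∧ AvoidsPat (stackSort p) [3, 1, 2]}
      = Nat.card {p : List ℕ | IsPermList n p ∧
      AvoidsPat (stackSort p) [1, 3, 2] ∧ AvoidsPat (stackSort p) [3, 1, 2]} := rfl
    _ = ((GoodF n : Set (List ℕ))).ncard := by rw [← hset, Nat.card_coe_set_eq]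
    _ = (GoodF n).card := Set.ncard_coe_finset _

/-! ### counting the thresholds -/

lemma two_thresholds {m : ℕ} (hm : 1 ≤ m) :
    ∑ a ∈ Finset.range (m+1), (CondF m a).card = 2 * (GoodF m).card := by
  classical
  have key : ∀ p ∈ permsF m,
      (Finset.filter (fun a => Lows a (stackSort p) ∧ Highs a (stackSort p))
        (Finset.range (m+1))).card = if Zig (stackSort p) then 2 else 0 := by
    intro p hp
    have hperm : stackSort p ~ bl m := (s_perm p).trans (mem_permsF.1 hp)
    have hnd : (stackSort p).Nodup := hperm.nodup_iff.2 (bl_nodup m)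
    have hne : stackSort p ≠ [] := by
      intro hc
      have := hperm.length_eq
      rw [hc, bl_length] at this
      simp at this; omega
    have hmem : ∀ x, x ∈ stackSort p ↔ 1 ≤ x ∧ x ≤ m := fun x =>
      (hperm.mem_iff).trans mem_bl
    set h0 := (stackSort p).getD 0 0 with hh0
    have hh0mem : h0 ∈ stackSort p := getD_mem' (length_pos_iff.2 hne)
    have hh0b := (hmem h0).1 hh0mem
    by_cases hz : Zig (stackSort p)
    · rw [if_pos hz]
      have hfe : Finset.filter (fun a => Lows a (stackSort p) ∧ Highs a (stackSort p))
          (Finset.range (m+1)) = {h0 - 1, h0} := by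
        ext a
        simp only [Finset.mem_filter, Finset.mem_range, Finset.mem_insert,
          Finset.mem_singleton]
        constructor
        · rintro ⟨ha, hl, hh⟩
          rcases threshold_eq hnd hne hmem (by omega) hl hh with h | h
          · left; omega
          · right; omega
        · intro ha
          have : a + 1 = h0 ∨ a = h0 := by omega
          refine ⟨by omega, cond_of_zig hz hnd hne ?_⟩
          exact this
      rw [hfe]
      rw [Finset.card_insert_of_notMem (by simp; omega), Finset.card_singleton]
    · rw [if_neg hz]
      rw [Finset.card_eq_zero, Finset.filter_eq_empty_iff]
      rintro a _ ⟨hl, hh⟩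
      exact hz (zig_of_cond hl hh)
  calc ∑ a ∈ Finset.range (m+1), (CondF m a).card
      = ∑ a ∈ Finset.range (m+1), ∑ p ∈ permsF m,
          (if Lows a (stackSort p) ∧ Highs a (stackSort p) then 1 else 0) := by
        refine Finset.sum_congr rfl fun a _ => ?_
        unfold CondF
        rw [@Finset.card_filter _ _ (Classical.decPred _)]
        exact Finset.sum_congr rfl fun p _ => by congr
    _ = ∑ p ∈ permsF m, ∑ a ∈ Finset.range (m+1),
          (if Lows a (stackSort p) ∧ Highs a (stackSort p) then 1 else 0) :=
        Finset.sum_comm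
    _ = ∑ p ∈ permsF m, (if Zig (stackSort p) then 2 else 0) := by
        refine Finset.sum_congr rfl fun p hp => ?_
        rw [← Finset.card_filter, key p hp]
    _ = ∑ p ∈ Finset.filter (fun p => Zig (stackSort p)) (permsF m), 2 :=
        (Finset.sum_filter _ _).symm
    _ = 2 * (GoodF m).card := by
        unfold GoodF
        rw [Finset.sum_const, smul_eq_mul,
          Finset.filter_congr_decidable, mul_comm]

lemma perm_nodup {n : ℕ} {p : List ℕ} (hp : p ~ bl n) : p.Nodup :=
  hp.nodup_iff.2 (bl_nodup n)

lemma perm_mem {n : ℕ} {p : List ℕ} (hp : p ~ bl n) : ∀ x, x ∈ p ↔ 1 ≤ x ∧ x ≤ n :=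
  fun x => hp.mem_iff.trans mem_bl

lemma sp_split {n : ℕ} {p L R : List ℕ} (hp : p ~ bl n) (hL : ∀ y ∈ L, y ≠ n)
    (he : p = L ++ n :: R) : stackSort p = stackSort L ++ stackSort R ++ [n] := by
  rw [he]
  exact s_split hL (fun y hy => ((perm_mem hp y).1 (he ▸ hy)).2)

lemma basics {n : ℕ} {p L R : List ℕ} (hp : p ~ bl n) (he : p = L ++ n :: R) :
    n ∉ L ∧ n ∉ R ∧ L.Nodup ∧ R.Nodup ∧ L.Disjoint R ∧
    (∀ y ∈ L, 1 ≤ y ∧ y ≤ n - 1) ∧ (∀ y ∈ R, 1 ≤ y ∧ y ≤ n - 1) ∧ 1 ≤ n := by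
  have hnd : p.Nodup := perm_nodup hp
  rw [he] at hnd
  have h1 := nodup_append.1 hnd
  obtain ⟨hLnd, hnR, hdisj⟩ := h1
  have hnRnd := nodup_cons.1 hnR
  have hn1 : 1 ≤ n := by
    have : n ∈ p := by rw [he]; simp
    exact ((perm_mem hp n).1 this).1
  have hnL : n ∉ L := fun h => hdisj n h n (by simp) rfl
  refine ⟨hnL, hnRnd.1, hLnd, hnRnd.2, ?_, ?_, ?_, hn1⟩
  · intro x hxL hxR
    exact hdisj x hxL x (by simp [hxR]) rfl
  · intro y hy
    have hyp : y ∈ p := by rw [he]; simp [hy]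
    have := (perm_mem hp y).1 hyp
    have : y ≠ n := fun h => hnL (h ▸ hy)
    omega
  · intro y hy
    have hyp : y ∈ p := by rw [he]; simp [hy]
    have h2 := (perm_mem hp y).1 hyp
    have : y ≠ n := fun h => hnRnd.1 (h ▸ hy)
    omega

lemma zig_iff_inner {n : ℕ} {p L R : List ℕ} (hp : p ~ bl n) (hL : ∀ y ∈ L, y ≠ n)
    (he : p = L ++ n :: R) :
    Zig (stackSort p) ↔ Zig (stackSort L ++ stackSort R) := by
  obtain ⟨hnL, hnR, _, _, _, hLb, hRb, hn1⟩ := basics hp he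
  rw [sp_split hp hL he]
  apply zig_append_end
  intro x hx
  rcases mem_append.1 hx with h | h
  · have := hLb _ ((s_perm L).mem_iff.1 h)
    omega
  · have := hRb _ ((s_perm R).mem_iff.1 h)
    omega

lemma mid_struct {n : ℕ} {p L R : List ℕ} (hp : p ~ bl n)
    (hL : ∀ y ∈ L, y ≠ n) (he : p = L ++ n :: R)
    (hz : Zig (stackSort p)) (hLne : L ≠ []) (hRne : R ≠ []) :
    (∀ y ∈ L, L.foldr min n ≤ y ∧ y ≤ L.foldr min n + (L.length - 1)) ∧
    (∀ v, L.foldr min n ≤ v → v ≤ L.foldr min n + (L.length - 1) → v ∈ L) ∧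
    (∀ x ∈ R, x < L.foldr min n ∨ L.foldr min n + (L.length - 1) < x) ∧
    (L.foldr min n + (L.length - 1) ≤ n - 1) ∧
    Zig (stackSort L) ∧
    Lows (L.foldr min n - 1) (stackSort R) ∧ Highs (L.foldr min n - 1) (stackSort R) ∧
    1 ≤ L.foldr min n := by
  obtain ⟨hnL, hnR, hLnd, hRnd, hdisj, hLb, hRb, hn1⟩ := basics hp he
  have hzi : Zig (stackSort L ++ stackSort R) := (zig_iff_inner hp hL he).1 hz
  set mn := L.foldr min n with hmn
  set mxL := L.foldr max 0 with hmxL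
  obtain ⟨y0, hy0⟩ := exists_mem_of_ne_nil L hLne
  have hmn_mem : mn ∈ L := by
    rcases foldr_min_mem (l := L) (c := n) with h | h
    · exfalso
      have := foldr_min_le (c := n) hy0
      have := hLb y0 hy0
      omega
    · exact h
  have hmn_b := hLb mn hmn_mem
  have hmx_mem : mxL ∈ L := mx_mem hLne
  have hmx_b := hLb mxL hmx_mem
  have hmnmx : mn ≤ mxL := foldr_min_le hmx_mem
  -- each element of R lies outside the whole range of L
  have hout : ∀ x ∈ R, (∀ y ∈ L, x < y) ∨ (∀ y ∈ L, y < x) := by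
    intro x hx
    by_contra hc
    push_neg at hc
    obtain ⟨⟨y, hy, hxy⟩, z, hz', hzx⟩ := hc
    have hxy' : y < x := by
      have : x ≠ y := fun h => (hdisj (h ▸ hy)) hx
      omega
    have hzx' : x < z := by
      have : x ≠ z := fun h => (hdisj (h ▸ hz')) hx
      omega
    have hxsR : x ∈ stackSort R := (s_perm R).mem_iff.2 hx
    obtain ⟨j, hj, hje⟩ := mem_index hxsR
    have hysL : y ∈ stackSort L := (s_perm L).mem_iff.2 hy
    have hzsL : z ∈ stackSort L := (s_perm L).mem_iff.2 hz'
    exact zig_out hzi hj hysL hzsL (by omega) (by omega)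
  have hdich : ∀ x ∈ R, x < mn ∨ mxL < x := by
    intro x hx
    rcases hout x hx with h | h
    · left; exact h mn hmn_mem
    · right; exact h mxL hmx_mem
  have hint : ∀ v, mn ≤ v → v ≤ mxL → v ∈ L := by
    intro v h1 h2
    have hvp : v ∈ p := (perm_mem hp v).2 ⟨by omega, by omega⟩
    rw [he, mem_append, mem_cons] at hvp
    rcases hvp with h | h
    · exact h
    · rcases h with rfl | h
      · omega
      · rcases hdich v h with h' | h' <;> omega
  -- L is exactly the interval [mn, mxL], so mxL = mn + (|L| - 1)
  have htf : L.toFinset = Finset.Icc mn mxL := by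
    ext x
    simp only [List.mem_toFinset, Finset.mem_Icc]
    exact ⟨fun h => ⟨foldr_min_le h, le_mx h⟩, fun ⟨h1, h2⟩ => hint x h1 h2⟩
  have hcard : L.length = mxL + 1 - mn := by
    rw [← toFinset_card_of_nodup hLnd, htf, Nat.card_Icc]
  have hmx_eq : mxL = mn + (L.length - 1) := by
    have h0 : 0 < L.length := length_pos_iff.2 hLne
    omega
  have hLlen : 0 < (stackSort L).length := by
    rw [(s_perm L).length_eq]
    exact length_pos_iff.2 hLne
  have hz0 : (stackSort L).getD 0 0 ∈ L := (s_perm L).mem_iff.1 (getD_mem' hLlen)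
  have hz0b : mn ≤ (stackSort L).getD 0 0 ∧ (stackSort L).getD 0 0 ≤ mxL :=
    ⟨foldr_min_le hz0, le_mx hz0⟩
  have hsRnd : (stackSort R).Nodup := (s_perm R).nodup_iff.2 hRnd
  have hsRlen : (stackSort R).length = R.length := (s_perm R).length_eq
  refine ⟨fun y hy => ⟨foldr_min_le hy, by rw [← hmx_eq]; exact le_mx hy⟩,
    fun v h1 h2 => hint v h1 (by omega),
    fun x hx => by rcases hdich x hx with h | h; exacts [Or.inl h, Or.inr (by omega)],
    by omega, zig_prefix hzi, ?_, ?_, by omega⟩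
  · -- Lows
    intro i j hij hj hia hja
    by_contra hc
    push_neg at hc
    have hne' := getD_nodup_ne hsRnd (Nat.ne_of_lt hij) (by omega) hj
    have h1 : (stackSort R).getD i 0 < (stackSort R).getD j 0 := by omega
    refine hzi ((stackSort L).length + i) 0 ((stackSort L).length + j)
      (by omega) (by omega) (by rw [length_append]; omega) ⟨?_, ?_⟩
    · rw [getD_append_right _ _ _ _ (by omega), getD_append_right _ _ _ _ (by omega),
        Nat.add_sub_cancel_left, Nat.add_sub_cancel_left]
      exact h1
    · rw [getD_append_right _ _ _ _ (by omega), Nat.add_sub_cancel_left,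
        getD_append _ _ _ _ (by omega)]
      omega
  · -- Highs
    intro i j hij hj hia hja
    by_contra hc
    push_neg at hc
    have hne' := getD_nodup_ne hsRnd (Nat.ne_of_lt hij) (by omega) hj
    have h2 : (stackSort R).getD j 0 < (stackSort R).getD i 0 := by omega
    have hjR : (stackSort R).getD j 0 ∈ R := (s_perm R).mem_iff.1 (getD_mem' hj)
    have hjhigh : mxL < (stackSort R).getD j 0 := by
      rcases hdich _ hjR with h | h
      · omega
      · exact h
    refine hzi 0 ((stackSort L).length + i) ((stackSort L).length + j)
      (by omega) (by omega) (by rw [length_append]; omega) ⟨?_, ?_⟩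
    · rw [getD_append _ _ _ _ (by omega), getD_append_right _ _ _ _ (by omega),
        Nat.add_sub_cancel_left]
      omega
    · rw [getD_append_right _ _ _ _ (by omega), getD_append_right _ _ _ _ (by omega),
        Nat.add_sub_cancel_left, Nat.add_sub_cancel_left]
      exact h2


def posn (n : ℕ) (p : List ℕ) : ℕ := (p.takeWhile (fun x => x ≠ n)).length + 1
def aInv (n : ℕ) (p : List ℕ) : ℕ := (p.takeWhile (fun x => x ≠ n)).foldr min n - 1

lemma decomp {n : ℕ} (hn : 1 ≤ n) {p : List ℕ} (hp : p ~ bl n) :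
    p = p.takeWhile (fun x => x ≠ n) ++ n :: (p.dropWhile (fun x => x ≠ n)).tail ∧
    (∀ y ∈ p.takeWhile (fun x => x ≠ n), y ≠ n) := by
  have hnp : n ∈ p := (perm_mem hp n).2 ⟨hn, le_rfl⟩
  have hD : p.dropWhile (fun x => x ≠ n) ≠ [] := dropWhile_ne_nil' hnp (by simp)
  have hhead : (p.dropWhile (fun x => x ≠ n)).head hD = n := by
    have := head_dropWhile_not (fun x => decide (x ≠ n)) (l := p) hD
    simpa using this
  have hDeq : p.dropWhile (fun x => x ≠ n) = n :: (p.dropWhile (fun x => x ≠ n)).tail := by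
    conv_lhs => rw [← cons_head_tail hD]
    rw [hhead]
  constructor
  · conv_lhs => rw [← takeWhile_append_dropWhile (p := fun x => decide (x ≠ n)) (l := p), hDeq]
  · intro y hy
    simpa using mem_takeWhile_imp hy

lemma length_p {n : ℕ} {p : List ℕ} (hp : p ~ bl n) : p.length = n := by
  rw [hp.length_eq, bl_length]

/-! ### case : n first -/

lemma pos_one_struct {n : ℕ} (hn : 2 ≤ n) {p : List ℕ} (hp : p ∈ GoodF n)
    (h1 : posn n p = 1) : p = n :: p.tail ∧ p.tail ∈ GoodF (n-1) := by
  obtain ⟨hperm, hzig⟩ := mem_GoodF.1 hp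
  obtain ⟨he, hLn⟩ := decomp (by omega) hperm
  have hlen0 : (p.takeWhile (fun x => x ≠ n)).length = 0 := by
    simpa [posn] using h1
  rw [length_eq_zero_iff] at hlen0
  rw [hlen0, nil_append] at he
  obtain ⟨n', rfl⟩ : ∃ n', n = n' + 1 := ⟨n - 1, by omega⟩
  have htail : p.tail = (p.dropWhile (fun x => x ≠ n'+1)).tail := by
    conv_lhs => rw [he]
    rfl
  have he' : p = (n'+1) :: p.tail := by rw [htail]; exact he
  refine ⟨he', ?_⟩
  rw [mem_GoodF]
  constructor
  · have h2 : (n'+1) :: p.tail ~ (n'+1) :: bl n' := by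
      rw [← he']
      exact hperm.trans (by rw [bl_succ]; exact perm_append_singleton _ _)
    simpa using h2.cons_inv
  · have hz2 := (zig_iff_inner (L := []) (R := p.tail) hperm (by simp)
      (by rw [nil_append]; exact he')).1 hzig
    show Zig (stackSort p.tail)
    have hnil : stackSort ([] : List ℕ) = [] := s_nil
    rwa [hnil, nil_append] at hz2

lemma pos_one_rev {n : ℕ} (hn : 2 ≤ n) {R : List ℕ} (hR : R ∈ GoodF (n-1)) :
    (n :: R) ∈ GoodF n ∧ posn n (n :: R) = 1 := by
  obtain ⟨hperm, hzig⟩ := mem_GoodF.1 hR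
  obtain ⟨n', rfl⟩ : ∃ n', n = n' + 1 := ⟨n - 1, by omega⟩
  simp only [Nat.add_sub_cancel] at hperm hzig
  have hp : (n'+1) :: R ~ bl (n'+1) := by
    rw [bl_succ]
    exact ((hperm.cons (n'+1)).trans (perm_append_singleton _ _).symm)
  have hpos : posn (n'+1) ((n'+1) :: R) = 1 := by
    simp [posn, takeWhile_cons]
  refine ⟨mem_GoodF.2 ⟨hp, ?_⟩, hpos⟩
  rw [zig_iff_inner (L := []) (R := R) hp (by simp) rfl]
  have hnil : stackSort ([] : List ℕ) = [] := s_nil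
  rw [hnil, nil_append]
  exact hzig

lemma card_pos_one {n : ℕ} (hn : 2 ≤ n) :
    ((GoodF n).filter (fun p => posn n p = 1)).card = (GoodF (n-1)).card := by
  classical
  refine Finset.card_bij' (fun p _ => p.tail) (fun R _ => n :: R) ?_ ?_ ?_ ?_
  · intro p hp
    obtain ⟨hp1, hp2⟩ := Finset.mem_filter.1 hp
    exact (pos_one_struct hn hp1 hp2).2
  · intro R hR
    obtain ⟨h1, h2⟩ := pos_one_rev hn hR
    exact Finset.mem_filter.2 ⟨h1, h2⟩
  · intro p hp
    obtain ⟨hp1, hp2⟩ := Finset.mem_filter.1 hp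
    exact ((pos_one_struct hn hp1 hp2).1).symm
  · intro R _
    rfl

/-! ### case : n last -/

lemma pos_n_struct {n : ℕ} (hn : 2 ≤ n) {p : List ℕ} (hp : p ∈ GoodF n)
    (h1 : posn n p = n) :
    p = p.takeWhile (fun x => x ≠ n) ++ [n] ∧ p.takeWhile (fun x => x ≠ n) ∈ GoodF (n-1) := by
  obtain ⟨hperm, hzig⟩ := mem_GoodF.1 hp
  obtain ⟨he, hLn⟩ := decomp (by omega) hperm
  set L := p.takeWhile (fun x => x ≠ n) with hLdef
  set R := (p.dropWhile (fun x => x ≠ n)).tail with hRdef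
  have hlen : L.length = n - 1 := by
    simp only [posn] at h1
    rw [← hLdef] at h1
    omega
  have hplen : p.length = n := length_p hperm
  have hRlen : R.length = 0 := by
    have : p.length = L.length + 1 + R.length := by
      rw [he]; simp [length_append]; omega
    omega
  rw [length_eq_zero_iff] at hRlen
  rw [hRlen] at he
  obtain ⟨n', rfl⟩ : ∃ n', n = n' + 1 := ⟨n - 1, by omega⟩
  refine ⟨he, mem_GoodF.2 ⟨?_, ?_⟩⟩
  · have h2 : L ++ [n'+1] ~ bl n' ++ [n'+1] := by
      rw [← bl_succ, ← he]; exact hperm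
    simpa using (perm_append_right_iff [n'+1]).1 h2
  · have hz2 := (zig_iff_inner hperm hLn he).1 hzig
    rw [s_nil, append_nil] at hz2
    simpa using hz2

lemma pos_n_rev {n : ℕ} (hn : 2 ≤ n) {L : List ℕ} (hL : L ∈ GoodF (n-1)) :
    (L ++ [n]) ∈ GoodF n ∧ posn n (L ++ [n]) = n ∧
    (L ++ [n]).takeWhile (fun x => x ≠ n) = L := by
  obtain ⟨hperm, hzig⟩ := mem_GoodF.1 hL
  obtain ⟨n', rfl⟩ : ∃ n', n = n' + 1 := ⟨n - 1, by omega⟩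
  simp only [Nat.add_sub_cancel] at hperm hzig
  have hLn : ∀ y ∈ L, y ≠ n'+1 := by
    intro y hy
    have := (perm_mem hperm y).1 hy
    omega
  have htake : (L ++ [n'+1]).takeWhile (fun x => x ≠ n'+1) = L := take_split hLn
  have hp : L ++ [n'+1] ~ bl (n'+1) := by
    rw [bl_succ]
    exact (perm_append_right_iff [n'+1]).2 hperm
  have hlenL : L.length = n' := length_p hperm
  refine ⟨mem_GoodF.2 ⟨hp, ?_⟩, ?_, htake⟩
  · rw [zig_iff_inner (L := L) (R := []) hp hLn rfl]
    have hnil : stackSort ([] : List ℕ) = [] := s_nil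
    rw [hnil, append_nil]
    exact hzig
  · show ((L ++ [n'+1]).takeWhile (fun x => x ≠ n'+1)).length + 1 = n' + 1
    rw [htake, hlenL]


lemma card_pos_n {n : ℕ} (hn : 2 ≤ n) :
    ((GoodF n).filter (fun p => posn n p = n)).card = (GoodF (n-1)).card := by
  classical
  refine Finset.card_bij' (fun p _ => p.takeWhile (fun x => x ≠ n))
    (fun L _ => L ++ [n]) ?_ ?_ ?_ ?_
  · intro p hp
    obtain ⟨h1, h2⟩ := Finset.mem_filter.1 hp
    exact (pos_n_struct hn h1 h2).2
  · intro L hL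
    obtain ⟨h1, h2, _⟩ := pos_n_rev hn hL
    exact Finset.mem_filter.2 ⟨h1, h2⟩
  · intro p hp
    obtain ⟨h1, h2⟩ := Finset.mem_filter.1 hp
    exact ((pos_n_struct hn h1 h2).1).symm
  · intro L hL
    exact (pos_n_rev hn hL).2.2

/-! ### middle case -/

lemma psi_mono (a k : ℕ) : StrictMono (fun x => if x ≤ a then x else x + k) := by
  intro x y h
  dsimp only
  split <;> split <;> omega

lemma psi_le (a k : ℕ) : ∀ x, (if x ≤ a then x else x + k) ≤ a ↔ x ≤ a := by
  intro x; split <;> omega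

lemma add_mono (a : ℕ) : StrictMono (fun y : ℕ => y + a) := by
  intro x y h
  simp only
  omega

lemma mid_fwd {n i a : ℕ} (hi1 : 2 ≤ i) (hi2 : i ≤ n - 1)
    {p L R : List ℕ} (hperm : p ~ bl n) (hzig : Zig (stackSort p))
    (hL : ∀ y ∈ L, y ≠ n) (he : p = L ++ n :: R) (hlenL : L.length = i - 1)
    (ha : L.foldr min n - 1 = a) :
    L.map (fun y => y - a) ∈ GoodF (i-1) ∧
    R.map (fun x => if x ≤ a then x else x - (i-1)) ∈ CondF (n-i) a ∧
    a ≤ n - i ∧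
    (L.map (fun y => y - a)).map (fun y => y + a) = L ∧
    (R.map (fun x => if x ≤ a then x else x - (i-1))).map
      (fun x => if x ≤ a then x else x + (i-1)) = R := by
  have hn : 2 ≤ n := by omega
  have hLne : L ≠ [] := by
    intro hc; rw [hc] at hlenL; simp at hlenL; omega
  have hplen : p.length = n := length_p hperm
  have hRlen : R.length = n - i := by
    have : p.length = L.length + 1 + R.length := by
      rw [he]; simp [length_append]; omega
    omega
  have hRne : R ≠ [] := by
    intro hc; rw [hc] at hRlen; simp at hRlen; omega
  obtain ⟨C1, C2, C3, C4, C5, C6l, C6h, C8⟩ := mid_struct hperm hL he hzig hLne hRne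
  rw [hlenL] at C1 C2 C3 C4
  have hmn : L.foldr min n = a + 1 := by omega
  rw [hmn] at C1 C2 C3 C4
  rw [ha] at C6l C6h
  -- basic bounds
  have hk1 : 1 ≤ i - 1 := by omega
  have haux : a + 1 + (i - 1 - 1) = a + (i - 1) := by omega
  rw [haux] at C1 C2 C3
  have hadn : a ≤ n - i := by omega
  -- nodup and disjointness facts
  have hnd : p.Nodup := perm_nodup hperm
  have hndLR : L.Nodup ∧ R.Nodup ∧ L.Disjoint R := by
    rw [he] at hnd
    obtain ⟨h1, h2, h3⟩ := nodup_append.1 hnd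
    exact ⟨h1, (nodup_cons.1 h2).2, fun x hx hx2 => h3 x hx x (by simp [hx2]) rfl⟩
  obtain ⟨hLnd, hRnd, hdisj⟩ := hndLR
  have hRb : ∀ y ∈ R, 1 ≤ y ∧ y ≤ n - 1 := by
    intro y hy
    have hyp : y ∈ p := by rw [he]; simp [hy]
    have h2 := (perm_mem hperm y).1 hyp
    have h3 : y ≠ n := by
      rw [he] at hnd
      intro hc
      have := (nodup_cons.1 (nodup_append.1 hnd).2.1).1
      exact this (hc ▸ hy)
    omega
  have hmemR : ∀ x, x ∈ R ↔ ((1 ≤ x ∧ x ≤ a) ∨ (a + i ≤ x ∧ x ≤ n - 1)) := by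
    intro x
    constructor
    · intro hx
      have hb := hRb x hx
      rcases C3 x hx with h | h
      · left; omega
      · right; omega
    · intro hx
      have hxn : x ∈ p := (perm_mem hperm x).2 ⟨by omega, by omega⟩
      rw [he, mem_append, mem_cons] at hxn
      rcases hxn with h | h
      · exfalso
        have := C1 x h
        omega
      · rcases h with rfl | h
        · omega
        · exact h
  -- L component
  have hLmap : (L.map (fun y => y - a)).map (fun y => y + a) = L := by
    rw [map_map]
    have : ∀ y ∈ L, ((fun y => y + a) ∘ (fun y => y - a)) y = id y := by
      intro y hy
      have := C1 y hy
      simp only [Function.comp, id]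
      omega
    rw [map_congr_left this, map_id]
  have hLg : L.map (fun y => y - a) ∈ GoodF (i-1) := by
    rw [mem_GoodF]
    constructor
    · apply perm_of_nodup_nodup_toFinset_eq
      · refine hLnd.map_on ?_
        intro x hx y hy hxy
        have := C1 x hx
        have := C1 y hy
        omega
      · exact bl_nodup _
      · ext x
        simp only [List.mem_toFinset, mem_map, mem_bl]
        constructor
        · rintro ⟨y, hy, rfl⟩
          have := C1 y hy
          omega
        · intro hx
          refine ⟨x + a, C2 (x + a) (by omega) (by omega), by omega⟩
    · have : stackSort L = (stackSort (L.map (fun y => y - a))).map (fun y => y + a) := by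
        rw [← s_map (add_mono a), hLmap]
      rw [this] at C5
      exact (zig_map_iff (add_mono a)).1 C5
  -- R component
  have hRmap : (R.map (fun x => if x ≤ a then x else x - (i-1))).map
      (fun x => if x ≤ a then x else x + (i-1)) = R := by
    rw [map_map]
    have : ∀ y ∈ R, ((fun x => if x ≤ a then x else x + (i-1)) ∘
        (fun x => if x ≤ a then x else x - (i-1))) y = id y := by
      intro y hy
      have := (hmemR y).1 hy
      simp only [Function.comp, id]
      rcases this with h | h
      · rw [if_pos (show y ≤ a by omega), if_pos (show y ≤ a by omega)]
      · rw [if_neg (show ¬ y ≤ a by omega), if_neg (show ¬ (y - (i-1)) ≤ a by omega)]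
        omega
    rw [map_congr_left this, map_id]
  have hRc : R.map (fun x => if x ≤ a then x else x - (i-1)) ∈ CondF (n-i) a := by
    rw [mem_CondF]
    refine ⟨?_, ?_, ?_⟩
    · apply perm_of_nodup_nodup_toFinset_eq
      · refine hRnd.map_on ?_
        intro x hx y hy hxy
        have h1 := (hmemR x).1 hx
        have h2 := (hmemR y).1 hy
        rcases h1 with h1 | h1 <;> rcases h2 with h2 | h2
        · rwa [if_pos (show x ≤ a by omega), if_pos (show y ≤ a by omega)] at hxy
        · rw [if_pos (show x ≤ a by omega), if_neg (show ¬ y ≤ a by omega)] at hxy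
          omega
        · rw [if_neg (show ¬ x ≤ a by omega), if_pos (show y ≤ a by omega)] at hxy
          omega
        · rw [if_neg (show ¬ x ≤ a by omega), if_neg (show ¬ y ≤ a by omega)] at hxy
          omega
      · exact bl_nodup _
      · ext x
        simp only [List.mem_toFinset, mem_map, mem_bl]
        constructor
        · rintro ⟨y, hy, rfl⟩
          have := (hmemR y).1 hy
          rcases this with h | h
          · rw [if_pos (by omega)]; omega
          · rw [if_neg (by omega)]; omega
        · intro hx
          by_cases hxa : x ≤ a
          · exact ⟨x, (hmemR x).2 (Or.inl ⟨by omega, hxa⟩), by rw [if_pos hxa]⟩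
          · refine ⟨x + (i-1), (hmemR _).2 (Or.inr ⟨by omega, by omega⟩), ?_⟩
            rw [if_neg (by omega)]
            omega
    · have : stackSort R = (stackSort (R.map (fun x => if x ≤ a then x else x - (i-1)))).map
          (fun x => if x ≤ a then x else x + (i-1)) := by
        rw [← s_map (psi_mono a (i-1)), hRmap]
      rw [this] at C6l
      exact (lows_map_iff (psi_mono a (i-1)) (psi_le a (i-1))).1 C6l
    · have : stackSort R = (stackSort (R.map (fun x => if x ≤ a then x else x - (i-1)))).map
          (fun x => if x ≤ a then x else x + (i-1)) := by
        rw [← s_map (psi_mono a (i-1)), hRmap]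
      rw [this] at C6h
      exact (highs_map_iff (psi_mono a (i-1)) (psi_le a (i-1))).1 C6h
  exact ⟨hLg, hRc, hadn, hLmap, hRmap⟩


lemma mid_rev {n i a : ℕ} (hn : 2 ≤ n) (hi1 : 2 ≤ i) (hi2 : i ≤ n - 1) (ha : a ≤ n - i)
    {L' R' : List ℕ} (hL' : L' ∈ GoodF (i-1)) (hR' : R' ∈ CondF (n-i) a) :
    (L'.map (fun y => y + a) ++ n :: R'.map (fun x => if x ≤ a then x else x + (i-1)))
      ∈ GoodF n ∧
    posn n (L'.map (fun y => y + a) ++ n :: R'.map (fun x => if x ≤ a then x else x + (i-1))) = i ∧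
    aInv n (L'.map (fun y => y + a) ++ n :: R'.map (fun x => if x ≤ a then x else x + (i-1))) = a ∧
    (L'.map (fun y => y + a) ++ n :: R'.map (fun x => if x ≤ a then x else x + (i-1))).takeWhile
      (fun x => x ≠ n) = L'.map (fun y => y + a) ∧
    ((L'.map (fun y => y + a) ++ n :: R'.map (fun x => if x ≤ a then x else x + (i-1))).dropWhile
      (fun x => x ≠ n)).tail = R'.map (fun x => if x ≤ a then x else x + (i-1)) ∧
    (L'.map (fun y => y + a)).map (fun y => y - a) = L' ∧
    (R'.map (fun x => if x ≤ a then x else x + (i-1))).map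
      (fun x => if x ≤ a then x else x - (i-1)) = R' := by
  obtain ⟨hpermL, hzigL⟩ := mem_GoodF.1 hL'
  obtain ⟨hpermR, hlowR, hhighR⟩ := mem_CondF.1 hR'
  set Lm := L'.map (fun y => y + a) with hLm
  set Rm := R'.map (fun x => if x ≤ a then x else x + (i-1)) with hRm
  have hk1 : 1 ≤ i - 1 := by omega
  have hm1 : 1 ≤ n - i := by omega
  have memLm : ∀ x, x ∈ Lm ↔ a + 1 ≤ x ∧ x ≤ a + (i-1) := by
    intro x
    rw [hLm, mem_map]
    constructor
    · rintro ⟨y, hy, rfl⟩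
      have := (perm_mem hpermL y).1 hy
      omega
    · intro hx
      exact ⟨x - a, (perm_mem hpermL _).2 ⟨by omega, by omega⟩, by omega⟩
  have memRm : ∀ x, x ∈ Rm ↔ (1 ≤ x ∧ x ≤ a) ∨ (a + i ≤ x ∧ x ≤ n - 1) := by
    intro x
    rw [hRm, mem_map]
    constructor
    · rintro ⟨y, hy, rfl⟩
      have := (perm_mem hpermR y).1 hy
      by_cases hya : y ≤ a
      · rw [if_pos hya]; omega
      · rw [if_neg hya]; right; omega
    · intro hx
      rcases hx with hx | hx
      · exact ⟨x, (perm_mem hpermR _).2 ⟨by omega, by omega⟩, by rw [if_pos (by omega)]⟩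
      · refine ⟨x - (i-1), (perm_mem hpermR _).2 ⟨by omega, by omega⟩, ?_⟩
        rw [if_neg (by omega)]
        omega
  have hLmn : ∀ y ∈ Lm, y ≠ n := by
    intro y hy
    have := (memLm y).1 hy
    omega
  have hpnd : (Lm ++ n :: Rm).Nodup := by
    rw [nodup_append]
    refine ⟨(perm_nodup hpermL).map (fun x y h => by omega), ?_, ?_⟩
    · rw [nodup_cons]
      constructor
      · intro hc
        have := (memRm n).1 hc
        omega
      · exact (perm_nodup hpermR).map (psi_mono a (i-1)).injective
    · intro x hx x' hx2 hxx
      subst hxx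
      have h1 := (memLm x).1 hx
      rcases mem_cons.1 hx2 with rfl | hx3
      · omega
      · have := (memRm x).1 hx3
        omega
  have hperm : Lm ++ n :: Rm ~ bl n := by
    apply perm_of_nodup_nodup_toFinset_eq hpnd (bl_nodup n)
    ext x
    simp only [List.mem_toFinset, mem_append, mem_cons, mem_bl]
    rw [memLm, memRm]
    omega
  have htake : (Lm ++ n :: Rm).takeWhile (fun x => x ≠ n) = Lm := take_split hLmn
  have hdrop : ((Lm ++ n :: Rm).dropWhile (fun x => x ≠ n)).tail = Rm := by
    rw [drop_split hLmn, tail_cons]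
  have hsLm : stackSort Lm = (stackSort L').map (fun y => y + a) := s_map (add_mono a) L'
  have hsRm : stackSort Rm = (stackSort R').map (fun x => if x ≤ a then x else x + (i-1)) :=
    s_map (psi_mono a (i-1)) R'
  have hzig : Zig (stackSort (Lm ++ n :: Rm)) := by
    rw [zig_iff_inner hperm hLmn rfl]
    apply zig_glue (a := a) (c := a + (i-1))
    · rw [hsLm]
      exact (zig_map_iff (add_mono a)).2 hzigL
    · omega
    · intro x hx
      have := (memLm x).1 ((s_perm Lm).mem_iff.1 hx)
      omega
    · intro x hx
      have := (memRm x).1 ((s_perm Rm).mem_iff.1 hx)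
      omega
    · rw [hsRm]
      exact (lows_map_iff (psi_mono a (i-1)) (psi_le a (i-1))).2 hlowR
    · rw [hsRm]
      exact (highs_map_iff (psi_mono a (i-1)) (psi_le a (i-1))).2 hhighR
  have hlenLm : Lm.length = i - 1 := by
    rw [hLm, length_map, length_p hpermL]
  have hpos : posn n (Lm ++ n :: Rm) = i := by
    simp only [posn]
    rw [htake, hlenLm]
    omega
  have hain : aInv n (Lm ++ n :: Rm) = a := by
    simp only [aInv]
    rw [htake]
    have hup : Lm.foldr min n ≤ a + 1 := by
      apply foldr_min_le
      rw [memLm]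
      omega
    have hlow : a + 1 ≤ Lm.foldr min n := by
      rcases foldr_min_mem (l := Lm) (c := n) with h | h
      · omega
      · exact ((memLm _).1 h).1
    omega
  have hLinv : Lm.map (fun y => y - a) = L' := by
    rw [hLm, map_map]
    have : ∀ y ∈ L', ((fun y => y - a) ∘ (fun y => y + a)) y = id y := by
      intro y hy
      simp only [Function.comp, id]
      omega
    rw [map_congr_left this, map_id]
  have hRinv : Rm.map (fun x => if x ≤ a then x else x - (i-1)) = R' := by
    rw [hRm, map_map]
    have : ∀ y ∈ R', ((fun x => if x ≤ a then x else x - (i-1)) ∘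
        (fun x => if x ≤ a then x else x + (i-1))) y = id y := by
      intro y hy
      have := (perm_mem hpermR y).1 hy
      simp only [Function.comp, id]
      by_cases hya : y ≤ a
      · rw [if_pos hya, if_pos hya]
      · rw [if_neg hya, if_neg (by omega)]
        omega
    rw [map_congr_left this, map_id]
  exact ⟨mem_GoodF.2 ⟨hperm, hzig⟩, hpos, hain, htake, hdrop, hLinv, hRinv⟩

lemma card_pos_mid {n i : ℕ} (hn : 2 ≤ n) (hi1 : 2 ≤ i) (hi2 : i ≤ n - 1) :
    ((GoodF n).filter (fun p => posn n p = i)).card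
      = (GoodF (i-1)).card * (2 * (GoodF (n-i)).card) := by
  classical
  have hm1 : 1 ≤ n - i := by omega
  -- extract the structure of a member of the fiber
  have hstruct : ∀ p ∈ (GoodF n).filter (fun p => posn n p = i),
      p = p.takeWhile (fun x => x ≠ n) ++ n :: (p.dropWhile (fun x => x ≠ n)).tail ∧
      (∀ y ∈ p.takeWhile (fun x => x ≠ n), y ≠ n) ∧
      (p.takeWhile (fun x => x ≠ n)).length = i - 1 := by
    intro p hp
    obtain ⟨hp1, hp2⟩ := Finset.mem_filter.1 hp
    obtain ⟨hperm, hzig⟩ := mem_GoodF.1 hp1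
    obtain ⟨he, hL⟩ := decomp (by omega) hperm
    simp only [posn] at hp2
    exact ⟨he, hL, by omega⟩
  have key : ∀ p ∈ (GoodF n).filter (fun p => posn n p = i),
      (p.takeWhile (fun x => x ≠ n)).map (fun y => y - aInv n p) ∈ GoodF (i-1) ∧
      ((p.dropWhile (fun x => x ≠ n)).tail).map
        (fun x => if x ≤ aInv n p then x else x - (i-1)) ∈ CondF (n-i) (aInv n p) ∧
      aInv n p ≤ n - i ∧
      ((p.takeWhile (fun x => x ≠ n)).map (fun y => y - aInv n p)).map
        (fun y => y + aInv n p) = p.takeWhile (fun x => x ≠ n) ∧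
      (((p.dropWhile (fun x => x ≠ n)).tail).map
        (fun x => if x ≤ aInv n p then x else x - (i-1))).map
        (fun x => if x ≤ aInv n p then x else x + (i-1)) = (p.dropWhile (fun x => x ≠ n)).tail := by
    intro p hp
    obtain ⟨he, hL, hlen⟩ := hstruct p hp
    obtain ⟨hp1, hp2⟩ := Finset.mem_filter.1 hp
    obtain ⟨hperm, hzig⟩ := mem_GoodF.1 hp1
    exact mid_fwd hi1 hi2 hperm hzig hL he hlen rfl
  have step1 : ((GoodF n).filter (fun p => posn n p = i)).card
      = ∑ a ∈ Finset.range (n-i+1),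
        (((GoodF n).filter (fun p => posn n p = i)).filter (fun p => aInv n p = a)).card := by
    apply Finset.card_eq_sum_card_fiberwise
    intro p hp
    rw [Finset.mem_coe, Finset.mem_range]
    have := (key p hp).2.2.1
    omega
  rw [step1]
  have step2 : ∀ a ∈ Finset.range (n-i+1),
      (((GoodF n).filter (fun p => posn n p = i)).filter (fun p => aInv n p = a)).card
        = ((GoodF (i-1)) ×ˢ (CondF (n-i) a)).card := by
    intro a hain
    have ha : a ≤ n - i := by
      rw [Finset.mem_range] at hain
      omega
    refine Finset.card_bij'
      (fun p _ => ((p.takeWhile (fun x => x ≠ n)).map (fun y => y - a),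
        ((p.dropWhile (fun x => x ≠ n)).tail).map (fun x => if x ≤ a then x else x - (i-1))))
      (fun q _ => q.1.map (fun y => y + a) ++ n :: q.2.map (fun x => if x ≤ a then x else x + (i-1)))
      ?_ ?_ ?_ ?_
    · intro p hp
      obtain ⟨hp', hpa⟩ := Finset.mem_filter.1 hp
      have hk := key p hp'
      rw [hpa] at hk
      exact Finset.mem_product.2 ⟨hk.1, hk.2.1⟩
    · intro q hq
      obtain ⟨hq1, hq2⟩ := Finset.mem_product.1 hq
      obtain ⟨h1, h2, h3, _, _, _, _⟩ := mid_rev hn hi1 hi2 ha hq1 hq2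
      exact Finset.mem_filter.2 ⟨Finset.mem_filter.2 ⟨h1, h2⟩, h3⟩
    · intro p hp
      obtain ⟨hp', hpa⟩ := Finset.mem_filter.1 hp
      have hk := key p hp'
      rw [hpa] at hk
      obtain ⟨he, hL, hlen⟩ := hstruct p hp'
      simp only
      rw [hk.2.2.2.1, hk.2.2.2.2]
      exact he.symm
    · intro q hq
      obtain ⟨hq1, hq2⟩ := Finset.mem_product.1 hq
      obtain ⟨h1, h2, h3, h4, h5, h6, h7⟩ := mid_rev hn hi1 hi2 ha hq1 hq2
      rw [h4, h5, h6, h7]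
  rw [Finset.sum_congr rfl step2]
  have : ∀ a, ((GoodF (i-1)) ×ˢ (CondF (n-i) a)).card
      = (GoodF (i-1)).card * (CondF (n-i) a).card := fun a => Finset.card_product _ _
  rw [Finset.sum_congr rfl (fun a _ => this a), ← Finset.mul_sum, two_thresholds hm1]


lemma posn_mem {n : ℕ} (hn : 2 ≤ n) {p : List ℕ} (hp : p ∈ GoodF n) :
    posn n p ∈ Finset.Icc 1 n := by
  obtain ⟨hperm, _⟩ := mem_GoodF.1 hp
  obtain ⟨he, _⟩ := decomp (by omega) hperm
  have hplen : p.length = n := length_p hperm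
  have hlen : p.length = (p.takeWhile (fun x => x ≠ n)).length + 1 +
      ((p.dropWhile (fun x => x ≠ n)).tail).length := by
    conv_lhs => rw [he]
    simp [length_append]
    omega
  rw [Finset.mem_Icc]
  simp only [posn]
  omega

lemma main_rec {n : ℕ} (hn : 2 ≤ n) :
    (GoodF n).card = 2 * (GoodF (n-1)).card
      + 2 * ∑ i ∈ Finset.Icc 2 (n-1), (GoodF (i-1)).card * (GoodF (n-i)).card := by
  classical
  rw [Finset.card_eq_sum_card_fiberwise (f := posn n) (t := Finset.Icc 1 n)
    (fun p hp => posn_mem hn hp)]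
  have hsplit : Finset.Icc 1 n = insert 1 (insert n (Finset.Icc 2 (n-1))) := by
    ext x
    simp only [Finset.mem_Icc, Finset.mem_insert]
    omega
  rw [hsplit, Finset.sum_insert (by simp only [Finset.mem_insert, Finset.mem_Icc]; omega),
      Finset.sum_insert (by simp only [Finset.mem_Icc]; omega)]
  have e1 : (Finset.filter (fun p => posn n p = 1) (GoodF n)).card = (GoodF (n-1)).card :=
    card_pos_one hn
  have e2 : (Finset.filter (fun p => posn n p = n) (GoodF n)).card = (GoodF (n-1)).card :=
    card_pos_n hn
  have e3 : ∀ i ∈ Finset.Icc 2 (n-1),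
      (Finset.filter (fun p => posn n p = i) (GoodF n)).card
        = (GoodF (i-1)).card * (2 * (GoodF (n-i)).card) := by
    intro i hi
    rw [Finset.mem_Icc] at hi
    exact card_pos_mid hn hi.1 hi.2
  rw [e1, e2, Finset.sum_congr rfl e3]
  have e4 : ∑ i ∈ Finset.Icc 2 (n-1), (GoodF (i-1)).card * (2 * (GoodF (n-i)).card)
      = 2 * ∑ i ∈ Finset.Icc 2 (n-1), (GoodF (i-1)).card * (GoodF (n-i)).card := by
    rw [Finset.mul_sum]
    exact Finset.sum_congr rfl fun i _ => by ring
  rw [e4]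
  ring

lemma goodF_one : (GoodF 1).card = 1 := by
  have h1 : GoodF 1 = {[1]} := by
    ext p
    rw [mem_GoodF]
    have hbl : bl 1 = [1] := rfl
    rw [hbl, perm_singleton, Finset.mem_singleton]
    constructor
    · rintro ⟨rfl, _⟩; rfl
    · rintro rfl
      refine ⟨rfl, ?_⟩
      intro i i' j h1 h2 hj
      have : stackSort [1] = [1] := rfl
      rw [this] at hj
      simp at hj
      omega
  rw [h1, Finset.card_singleton]

end SP

/-- `b 1 = 1` and for every `n ≥ 2`,
`b n = 2 b_{n-1} + 2 ∑_{i=2}^{n-1} b_{i-1} b_{n-i}`. -/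
theorem preimage_av132_312_recurrence :
    b 1 = 1 ∧
      ∀ n : ℕ, 2 ≤ n →
        b n = 2 * b (n - 1) + 2 * ∑ i ∈ Finset.Icc 2 (n - 1), b (i - 1) * b (n - i) := by
  constructor
  · rw [SP.b_eq one_ne_zero, SP.goodF_one]
  · intro n hn
    rw [SP.b_eq (by omega : n ≠ 0), SP.b_eq (by omega : n - 1 ≠ 0), SP.main_rec hn]
    congr 1
    rw [Finset.mul_sum, Finset.mul_sum]
    apply Finset.sum_congr rfl
    intro i hi
    rw [Finset.mem_Icc] at hi
    rw [SP.b_eq (by omega : i - 1 ≠ 0), SP.b_eq (by omega : n - i ≠ 0)]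
end

section
/- For every n ≥ 1, the number of permutations p of length n such that s(p) avoids both 231 and 312 equals a_n, the number of 0-1-trees on n vertices; that is, |s^{-1}(Av_n(231,312))| = a_n. -/
/-- A 0-1-tree: a plane binary tree (every non-leaf vertex has a left child, a
right child, or both) in which every vertex with two children carries a label
`0` or `1` (here, a `Bool`). -/
inductive ZOTree : Type
  | leaf : ZOTree
  | left (child : ZOTree) : ZOTree
  | right (child : ZOTree) : ZOTree
  | both (label : Bool) (lchild rchild : ZOTree) : ZOTree

/-- The number of vertices of a 0-1-tree. -/
def ZOTree.size : ZOTree → ℕ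
  | .leaf => 1
  | .left c => c.size + 1
  | .right c => c.size + 1
  | .both _ l r => l.size + r.size + 1

/-- `a n`: the number of 0-1-trees on `n` vertices (there are none on `0` vertices). -/
noncomputable def countZOTrees (n : ℕ) : ℕ :=
  Nat.card {t : ZOTree // t.size = n}

lemma foldr_max_le {l : List ℕ} {x : ℕ} (h : x ∈ l) : x ≤ l.foldr max 0 := by
  induction l with
  | nil => cases h
  | cons a t ih =>
    rcases List.mem_cons.1 h with rfl | h
    · exact le_max_left _ _
    · exact le_trans (ih h) (le_max_right _ _)

lemma foldr_max_le_of {l : List ℕ} {m : ℕ} (h : ∀ x ∈ l, x ≤ m) : l.foldr max 0 ≤ m := by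
  induction l with
  | nil => simp
  | cons a t ih =>
    simp only [List.foldr_cons, max_le_iff]
    exact ⟨h a (List.mem_cons_self), ih fun x hx => h x (List.mem_cons_of_mem _ hx)⟩

lemma foldr_max_mem {l : List ℕ} (h : l.foldr max 0 ≠ 0) : l.foldr max 0 ∈ l := by
  induction l with
  | nil => simp at h
  | cons a t ih =>
    simp only [List.foldr_cons] at h ⊢
    rcases max_cases a (t.foldr max 0) with ⟨h1, _⟩ | ⟨h1, _⟩
    · rw [h1]; exact List.mem_cons_self
    · rw [h1] at h ⊢; exact List.mem_cons_of_mem _ (ih h)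

lemma foldr_max_eq {l : List ℕ} {m : ℕ} (hmem : m ∈ l) (h : ∀ x ∈ l, x ≤ m) :
    l.foldr max 0 = m :=
  le_antisymm (foldr_max_le_of h) (foldr_max_le hmem)

lemma dropWhile_max_ne {l : List ℕ} (h : l.foldr max 0 ∈ l) :
    l.dropWhile (fun x => x ≠ l.foldr max 0) =
      l.foldr max 0 :: (l.dropWhile (fun x => x ≠ l.foldr max 0)).tail := by
  set m := l.foldr max 0 with hm
  have hne : l.dropWhile (fun x => x ≠ m) ≠ [] := by
    intro hnil
    have := (List.dropWhile_eq_nil_iff).1 hnil m h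
    simp at this
  obtain ⟨b, t, hbt⟩ := List.exists_cons_of_ne_nil hne
  have hb : b = m := by
    have := List.head?_dropWhile_not (fun x => x ≠ m) l
    rw [hbt] at this
    simpa using this
  rw [hbt, hb]
  simp

lemma takeWhile_length_lt {l : List ℕ} (h : l.foldr max 0 ∈ l) :
    (l.takeWhile (fun x => x ≠ l.foldr max 0)).length < l.length ∧
    ((l.dropWhile (fun x => x ≠ l.foldr max 0)).tail).length < l.length := by
  have hsplit := List.takeWhile_append_dropWhile (p := fun x => x ≠ l.foldr max 0) (l := l)
  have hd := dropWhile_max_ne h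
  constructor
  · have hlen : l.length = (l.takeWhile (fun x => x ≠ l.foldr max 0)).length +
        (l.dropWhile (fun x => x ≠ l.foldr max 0)).length := by
      conv_lhs => rw [← hsplit]
      rw [List.length_append]
    rw [hlen, hd]
    simp
  · have h1 : ((l.dropWhile (fun x => x ≠ l.foldr max 0)).tail).length <
        (l.dropWhile (fun x => x ≠ l.foldr max 0)).length := by
      rw [hd]; simp
    have h2 : (l.dropWhile (fun x => x ≠ l.foldr max 0)).length ≤ l.length :=
      (List.dropWhile_sublist _).length_le
    omega

lemma pos_of_mem_sub {l : List ℕ} (hpos : ∀ x ∈ l, 0 < x) :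
    (∀ x ∈ l.takeWhile (fun x => x ≠ l.foldr max 0), 0 < x) ∧
    (∀ x ∈ (l.dropWhile (fun x => x ≠ l.foldr max 0)).tail, 0 < x) := by
  constructor
  · intro x hx; exact hpos x ((List.takeWhile_sublist _).mem hx)
  · intro x hx
    exact hpos x ((List.dropWhile_sublist _).mem ((List.tail_sublist _).mem hx))

lemma max_mem_of_pos {l : List ℕ} (hne : l ≠ []) (hpos : ∀ x ∈ l, 0 < x) :
    l.foldr max 0 ∈ l := by
  apply foldr_max_mem
  obtain ⟨a, t, rfl⟩ := List.exists_cons_of_ne_nil hne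
  have h1 : 0 < a := hpos a (List.mem_cons_self)
  have h2 : a ≤ (a :: t).foldr max 0 := foldr_max_le (List.mem_cons_self)
  omega

lemma stackSortAux_congr_aux : ∀ n f₁ f₂ : ℕ, ∀ l : List ℕ, l.length = n →
    (∀ x ∈ l, 0 < x) → l.length ≤ f₁ → l.length ≤ f₂ →
    stackSortAux f₁ l = stackSortAux f₂ l := by
  intro n
  induction n using Nat.strong_induction_on with
  | _ n ih =>
  intro f₁ f₂ l hn hpos h1 h2
  subst hn
  rcases l with _ | ⟨a, t⟩
  · match f₁, f₂ with
    | 0, 0 => rfl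
    | 0, _+1 => rfl
    | _+1, 0 => rfl
    | _+1, _+1 => rfl
  · match f₁, f₂, h1, h2 with
    | k₁+1, k₂+1, h1, h2 =>
      rw [stackSortAux, stackSortAux]
      have hmem : (a::t).foldr max 0 ∈ (a::t) := max_mem_of_pos (by simp) hpos
      have hlt := takeWhile_length_lt hmem
      have hsub := pos_of_mem_sub hpos
      have e1 := ih ((a::t).takeWhile (fun x => x ≠ (a::t).foldr max 0)).length hlt.1
        k₁ k₂ _ rfl hsub.1 (by omega) (by omega)
      have e2 := ih (((a::t).dropWhile (fun x => x ≠ (a::t).foldr max 0)).tail).length hlt.2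
        k₁ k₂ _ rfl hsub.2 (by omega) (by omega)
      simp only [e1, e2]

lemma stackSortAux_congr {f₁ f₂ : ℕ} {l : List ℕ} (hpos : ∀ x ∈ l, 0 < x)
    (h1 : l.length ≤ f₁) (h2 : l.length ≤ f₂) : stackSortAux f₁ l = stackSortAux f₂ l :=
  stackSortAux_congr_aux l.length f₁ f₂ l rfl hpos h1 h2

lemma stackSortAux_eq_stackSort {f : ℕ} {l : List ℕ} (hpos : ∀ x ∈ l, 0 < x)
    (h : l.length ≤ f) : stackSortAux f l = stackSort l :=
  stackSortAux_congr hpos h le_rfl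

lemma stackSort_nil : stackSort [] = [] := rfl

lemma stackSort_unfold {l : List ℕ} (hne : l ≠ []) (hpos : ∀ x ∈ l, 0 < x) :
    stackSort l = stackSort (l.takeWhile (fun x => x ≠ l.foldr max 0)) ++
      stackSort ((l.dropWhile (fun x => x ≠ l.foldr max 0)).tail) ++ [l.foldr max 0] := by
  obtain ⟨a, t, rfl⟩ := List.exists_cons_of_ne_nil hne
  have hmem : (a::t).foldr max 0 ∈ (a::t) := max_mem_of_pos (by simp) hpos
  have hlt := takeWhile_length_lt hmem
  have hsub := pos_of_mem_sub hpos
  show stackSortAux ((a::t).length) (a::t) = _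
  rw [show (a::t).length = t.length + 1 from rfl, stackSortAux]
  rw [stackSortAux_eq_stackSort hsub.1 (by simpa using Nat.lt_succ_iff.mp hlt.1),
      stackSortAux_eq_stackSort hsub.2 (by simpa using Nat.lt_succ_iff.mp hlt.2)]

lemma stackSort_perm_aux : ∀ n : ℕ, ∀ l : List ℕ, l.length = n → (∀ x ∈ l, 0 < x) →
    (stackSort l).Perm l := by
  intro n
  induction n using Nat.strong_induction_on with
  | _ n ih =>
  intro l hn hpos
  rcases eq_or_ne l [] with rfl | hne
  · simp [stackSort_nil]
  rw [stackSort_unfold hne hpos]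
  have hmem : l.foldr max 0 ∈ l := max_mem_of_pos hne hpos
  have hlt := takeWhile_length_lt hmem
  have hsub := pos_of_mem_sub hpos
  have p1 := ih _ (hn ▸ hlt.1) _ rfl hsub.1
  have p2 := ih _ (hn ▸ hlt.2) _ rfl hsub.2
  have step1 : (stackSort (l.takeWhile (fun x => x ≠ l.foldr max 0)) ++
      stackSort ((l.dropWhile (fun x => x ≠ l.foldr max 0)).tail) ++ [l.foldr max 0]).Perm
      ((l.takeWhile (fun x => x ≠ l.foldr max 0)) ++
        (((l.dropWhile (fun x => x ≠ l.foldr max 0)).tail) ++ [l.foldr max 0])) := by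
    rw [← List.append_assoc]
    exact List.Perm.append (List.Perm.append p1 p2) (List.Perm.refl _)
  have step2 : (((l.dropWhile (fun x => x ≠ l.foldr max 0)).tail) ++ [l.foldr max 0]).Perm
      (l.dropWhile (fun x => x ≠ l.foldr max 0)) := by
    rw [dropWhile_max_ne hmem]
    simpa using (List.perm_middle (a := l.foldr max 0)
      (l₁ := (l.dropWhile (fun x => x ≠ l.foldr max 0)).tail) (l₂ := []))
  refine (step1.trans ((List.Perm.append_left _ step2).trans ?_))
  rw [List.takeWhile_append_dropWhile]

lemma stackSort_perm {l : List ℕ} (hpos : ∀ x ∈ l, 0 < x) : (stackSort l).Perm l :=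
  stackSort_perm_aux l.length l rfl hpos

lemma takeWhile_split {L R : List ℕ} {m : ℕ} (hL : ∀ x ∈ L, x ≠ m) :
    (L ++ m :: R).takeWhile (fun x => x ≠ m) = L ∧
    (L ++ m :: R).dropWhile (fun x => x ≠ m) = m :: R := by
  induction L with
  | nil => constructor <;> simp [List.takeWhile_cons, List.dropWhile_cons]
  | cons a t ih =>
    have ha : a ≠ m := hL a (List.mem_cons_self)
    have iht := ih fun x hx => hL x (List.mem_cons_of_mem _ hx)
    constructor
    · simp only [List.cons_append, List.takeWhile_cons, ha, decide_true, decide_eq_true_eq,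
        if_pos, ne_eq, not_false_eq_true, iht.1]
    · simp only [List.cons_append, List.dropWhile_cons, ha, decide_true, decide_eq_true_eq,
        if_pos, ne_eq, not_false_eq_true, iht.2]

lemma stackSort_split {L R : List ℕ} {m : ℕ} (hm : 0 < m)
    (hL : ∀ x ∈ L, 0 < x ∧ x < m) (hR : ∀ x ∈ R, 0 < x ∧ x < m) :
    stackSort (L ++ m :: R) = stackSort L ++ stackSort R ++ [m] := by
  have hpos : ∀ x ∈ L ++ m :: R, 0 < x := by
    intro x hx
    rcases List.mem_append.1 hx with h | h
    · exact (hL x h).1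
    · rcases List.mem_cons.1 h with rfl | h
      · exact hm
      · exact (hR x h).1
  have hne : L ++ m :: R ≠ [] := by simp
  have hmax : (L ++ m :: R).foldr max 0 = m := by
    apply foldr_max_eq (by simp)
    intro x hx
    rcases List.mem_append.1 hx with h | h
    · exact le_of_lt (hL x h).2
    · rcases List.mem_cons.1 h with rfl | h
      · exact le_rfl
      · exact le_of_lt (hR x h).2
  have hsp := takeWhile_split (L := L) (R := R) (m := m) (fun x hx => Nat.ne_of_lt (hL x hx).2)
  rw [stackSort_unfold hne hpos, hmax, hsp.1, hsp.2]
  rfl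

lemma foldr_max_map {f : ℕ → ℕ} (hf : Monotone f) :
    ∀ l : List ℕ, l ≠ [] → (l.map f).foldr max 0 = f (l.foldr max 0) := by
  intro l
  induction l with
  | nil => simp
  | cons a t ih =>
    intro _
    rcases eq_or_ne t [] with rfl | hne
    · simp
    · simp only [List.map_cons, List.foldr_cons, ih hne]
      rw [← Monotone.map_max hf]

lemma stackSortAux_map {f : ℕ → ℕ} (hf : StrictMono f) :
    ∀ fuel (l : List ℕ), stackSortAux fuel (l.map f) = (stackSortAux fuel l).map f := by
  intro fuel
  induction fuel with
  | zero => intro l; rfl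
  | succ k ih =>
    intro l
    rcases l with _ | ⟨a, t⟩
    · rfl
    · show stackSortAux (k+1) (f a :: t.map f) = _
      rw [stackSortAux, stackSortAux]
      have hfold : (f a :: t.map f).foldr max 0 = f ((a :: t).foldr max 0) := by
        have := foldr_max_map hf.monotone (a :: t) (by simp)
        simpa using this
      have hpred : (fun x => decide (x ≠ f ((a::t).foldr max 0))) ∘ f =
          fun x => decide (x ≠ (a::t).foldr max 0) := by
        funext x
        simp only [Function.comp, ne_eq, hf.injective.eq_iff]
      have htake : (f a :: t.map f).takeWhile (fun x => x ≠ (f a :: t.map f).foldr max 0) =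
          ((a::t).takeWhile (fun x => x ≠ (a::t).foldr max 0)).map f := by
        rw [hfold, show (f a :: t.map f) = (a::t).map f from rfl, List.takeWhile_map, hpred]
      have hdrop : (f a :: t.map f).dropWhile (fun x => x ≠ (f a :: t.map f).foldr max 0) =
          ((a::t).dropWhile (fun x => x ≠ (a::t).foldr max 0)).map f := by
        rw [hfold, show (f a :: t.map f) = (a::t).map f from rfl, List.dropWhile_map, hpred]
      rw [htake, hdrop, hfold, ← List.map_tail, ih, ih]
      simp

lemma stackSort_map {f : ℕ → ℕ} (hf : StrictMono f) (l : List ℕ) :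
    stackSort (l.map f) = (stackSort l).map f := by
  unfold stackSort
  rw [List.length_map]
  exact stackSortAux_map hf l.length l

lemma chain_of_chain_map {f : ℕ → ℕ} (hf : StrictMono f) {w : List ℕ}
    (h : (w.map f).Chain' (fun a b => a ≤ b + 1)) : w.Chain' (fun a b => a ≤ b + 1) := by
  unfold List.Chain' at h ⊢
  rw [List.isChain_map] at h
  refine h.imp ?_
  intro a b hab
  by_contra hc
  push_neg at hc
  have h2 : f b < f (b+1) := hf (by omega)
  have h3 : f (b+1) < f (b+2) := hf (by omega)
  have h1 : f (b+2) ≤ f a := hf.monotone (by omega)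
  omega

lemma chain_map_add {i : ℕ} {w : List ℕ} (h : w.Chain' (fun a b => a ≤ b + 1)) :
    (w.map (· + i)).Chain' (fun a b => a ≤ b + 1) := by
  unfold List.Chain' at h ⊢
  rw [List.isChain_map]
  exact h.imp (fun hab => by omega)

lemma stackSort_getLast {l : List ℕ} (hne : l ≠ []) (hpos : ∀ x ∈ l, 0 < x) :
    (stackSort l).getLast? = some (l.foldr max 0) := by
  rw [stackSort_unfold hne hpos]
  simp

lemma walk_mem : ∀ (v u : List ℕ) (c b x : ℕ),
    (u ++ v).Chain' (fun a b => a ≤ b + 1) → u.getLast? = some c → b ∈ v →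
    b ≤ x → x < c → x ∈ v := by
  intro v
  induction v with
  | nil => intro u c b x _ _ hb; cases hb
  | cons d v' ih =>
    intro u c b x hchain hlast hb hbx hxc
    have hjun : c ≤ d + 1 := by
      have h3 := (List.isChain_append.1 hchain).2.2
      exact h3 c hlast d (by simp)
    rcases eq_or_lt_of_le (show x ≤ d by omega) with rfl | hxd
    · exact List.mem_cons_self
    · have hbv' : b ∈ v' := by
        rcases List.mem_cons.1 hb with rfl | h
        · omega
        · exact h
      have hchain' : ((u ++ [d]) ++ v').Chain' (fun a b => a ≤ b + 1) := by
        simpa [List.append_assoc] using hchain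
      exact List.mem_cons_of_mem _
        (ih (u ++ [d]) d b x hchain' (by simp) hbv' hbx hxd)

lemma isPermList_nodup {n : ℕ} {w : List ℕ} (h : IsPermList n w) : w.Nodup :=
  h.nodup_iff.2 (List.Nodup.map (fun a b => by omega) (List.nodup_range))

lemma isPermList_mem {n : ℕ} {w : List ℕ} (h : IsPermList n w) (x : ℕ) :
    x ∈ w ↔ 1 ≤ x ∧ x ≤ n := by
  rw [h.mem_iff]
  simp only [List.mem_map, List.mem_range]
  constructor
  · rintro ⟨y, hy, rfl⟩; omega
  · rintro ⟨h1, h2⟩; exact ⟨x - 1, by omega, by omega⟩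

lemma isPermList_length {n : ℕ} {w : List ℕ} (h : IsPermList n w) : w.length = n := by
  simpa using h.length_eq

lemma take_drop_disjoint {w : List ℕ} (hnd : w.Nodup) (k : ℕ) :
    ∀ x, x ∈ w.take k → x ∈ w.drop k → False := by
  intro x h1 h2
  have hh : (w.take k ++ w.drop k).Nodup := by rw [List.take_append_drop]; exact hnd
  exact (List.disjoint_of_nodup_append hh) h1 h2

lemma getLast?_take {w : List ℕ} {k : ℕ} (hk : k < w.length) :
    (w.take (k+1)).getLast? = some (w.get ⟨k, hk⟩) := by
  rw [List.getLast?_eq_getElem?]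
  have hlen : (w.take (k+1)).length = k + 1 := by
    rw [List.length_take]; omega
  rw [hlen]
  simp only [Nat.add_sub_cancel]
  rw [List.getElem?_take, if_pos (by omega), List.getElem?_eq_getElem hk]
  rfl

lemma mem_drop_of_get {w : List ℕ} {k : ℕ} (j : Fin w.length) (hj : k ≤ (j : ℕ)) :
    w.get j ∈ w.drop k := by
  have h1 : (j : ℕ) - k < (w.drop k).length := by
    rw [List.length_drop]; omega
  have : (w.drop k).get ⟨(j : ℕ) - k, h1⟩ = w.get j := by
    simp only [List.get_eq_getElem, List.getElem_drop]
    congr 1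
    omega
  rw [← this]
  exact List.get_mem _ _

lemma mem_take_of_get {w : List ℕ} {k : ℕ} (j : Fin w.length) (hj : (j : ℕ) < k) :
    w.get j ∈ w.take k := by
  have h1 : (j : ℕ) < (w.take k).length := by
    rw [List.length_take]; exact lt_min hj j.isLt
  have : (w.take k).get ⟨(j : ℕ), h1⟩ = w.get j := by
    simp [List.getElem_take]
  rw [← this]
  exact List.get_mem _ _

lemma chain_avoids {w : List ℕ} (hnd : w.Nodup)
    (hchain : w.Chain' (fun a b => a ≤ b + 1)) :
    AvoidsPat w [2, 3, 1] ∧ AvoidsPat w [3, 1, 2] := by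
  constructor
  · rintro ⟨f, hmono, hiff⟩
    have h01 : w.get (f ⟨0, by norm_num⟩) < w.get (f ⟨1, by norm_num⟩) :=
      (hiff ⟨0, by norm_num⟩ ⟨1, by norm_num⟩).1 (by norm_num)
    have h20 : w.get (f ⟨2, by norm_num⟩) < w.get (f ⟨0, by norm_num⟩) :=
      (hiff ⟨2, by norm_num⟩ ⟨0, by norm_num⟩).1 (by norm_num)
    set p0 := f ⟨0, by norm_num⟩
    set p1 := f ⟨1, by norm_num⟩
    set p2 := f ⟨2, by norm_num⟩
    have hp01 : (p0 : ℕ) < (p1 : ℕ) := hmono (show (⟨0, by norm_num⟩ : Fin 3) < ⟨1, by norm_num⟩ by simp [Fin.lt_def])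
    have hp12 : (p1 : ℕ) < (p2 : ℕ) := hmono (show (⟨1, by norm_num⟩ : Fin 3) < ⟨2, by norm_num⟩ by simp [Fin.lt_def])
    have hsplit : w = w.take ((p1 : ℕ)+1) ++ w.drop ((p1 : ℕ)+1) := (List.take_append_drop _ _).symm
    have hch2 : (w.take ((p1 : ℕ)+1) ++ w.drop ((p1 : ℕ)+1)).Chain' (fun a b => a ≤ b + 1) := by
      rw [← hsplit]; exact hchain
    have hxv : w.get p0 ∈ w.drop ((p1 : ℕ)+1) := by
      refine walk_mem _ _ (w.get p1) (w.get p2) _ hch2 ?_ ?_ (le_of_lt h20) h01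
      · exact getLast?_take p1.isLt
      · exact mem_drop_of_get p2 (by omega)
    have hxu : w.get p0 ∈ w.take ((p1 : ℕ)+1) := mem_take_of_get p0 (by omega)
    exact take_drop_disjoint hnd _ _ hxu hxv
  · rintro ⟨f, hmono, hiff⟩
    have h12 : w.get (f ⟨1, by norm_num⟩) < w.get (f ⟨2, by norm_num⟩) :=
      (hiff ⟨1, by norm_num⟩ ⟨2, by norm_num⟩).1 (by norm_num)
    have h20 : w.get (f ⟨2, by norm_num⟩) < w.get (f ⟨0, by norm_num⟩) :=
      (hiff ⟨2, by norm_num⟩ ⟨0, by norm_num⟩).1 (by norm_num)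
    set p0 := f ⟨0, by norm_num⟩
    set p1 := f ⟨1, by norm_num⟩
    set p2 := f ⟨2, by norm_num⟩
    have hp01 : (p0 : ℕ) < (p1 : ℕ) := hmono (show (⟨0, by norm_num⟩ : Fin 3) < ⟨1, by norm_num⟩ by simp [Fin.lt_def])
    have hp12 : (p1 : ℕ) < (p2 : ℕ) := hmono (show (⟨1, by norm_num⟩ : Fin 3) < ⟨2, by norm_num⟩ by simp [Fin.lt_def])
    set w' := w.take ((p1 : ℕ)+1) with hw'
    have hw'len : w'.length = (p1 : ℕ) + 1 := by
      rw [hw', List.length_take]; have := p1.isLt; omega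
    have hch' : w'.Chain' (fun a b => a ≤ b + 1) := hchain.take _
    have hsplit : w' = w'.take ((p0 : ℕ)+1) ++ w'.drop ((p0 : ℕ)+1) := (List.take_append_drop _ _).symm
    have hch2 : (w'.take ((p0 : ℕ)+1) ++ w'.drop ((p0 : ℕ)+1)).Chain' (fun a b => a ≤ b + 1) := by
      rw [← hsplit]; exact hch'
    have hgp0 : ∃ (h : (p0 : ℕ) < w'.length), w'.get ⟨(p0 : ℕ), h⟩ = w.get p0 := by
      refine ⟨by omega, ?_⟩
      simp [hw', List.getElem_take]
    have hgp1 : ∃ (h : (p1 : ℕ) < w'.length), w'.get ⟨(p1 : ℕ), h⟩ = w.get p1 := by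
      refine ⟨by omega, ?_⟩
      simp [hw', List.getElem_take]
    obtain ⟨hl0, he0⟩ := hgp0
    obtain ⟨hl1, he1⟩ := hgp1
    have hxv : w.get p2 ∈ w'.drop ((p0 : ℕ)+1) := by
      refine walk_mem _ _ (w.get p0) (w.get p1) _ hch2 ?_ ?_ (le_of_lt h12) h20
      · rw [← he0]; exact getLast?_take hl0
      · rw [← he1]; exact mem_drop_of_get (⟨(p1 : ℕ), hl1⟩ : Fin w'.length) (by simp; omega)
    have hxw' : w.get p2 ∈ w' := (List.drop_sublist _ _).mem hxv
    have hxdrop : w.get p2 ∈ w.drop ((p1 : ℕ)+1) := mem_drop_of_get p2 (by omega)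
    exact take_drop_disjoint hnd _ _ hxw' hxdrop

lemma contains231 {w : List ℕ} (p0 p1 p2 : Fin w.length) (h01 : p0 < p1) (h12 : p1 < p2)
    (h1 : w.get p2 < w.get p0) (h2 : w.get p0 < w.get p1) : ContainsPat w [2, 3, 1] := by
  have h02 : p0 < p2 := h01.trans h12
  refine ⟨![p0, p1, p2], ?_, ?_⟩
  · intro x y hxy
    fin_cases x <;> fin_cases y
    all_goals simp only [Fin.mk_lt_mk] at hxy ⊢
    all_goals first
      | omega
      | exact h01 | exact h12 | exact h02
  · intro x y
    simp only [List.get_eq_getElem] at h1 h2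
    fin_cases x <;> fin_cases y
    all_goals norm_num
    all_goals omega

lemma contains312 {w : List ℕ} (p0 p1 p2 : Fin w.length) (h01 : p0 < p1) (h12 : p1 < p2)
    (h1 : w.get p1 < w.get p2) (h2 : w.get p2 < w.get p0) : ContainsPat w [3, 1, 2] := by
  have h02 : p0 < p2 := h01.trans h12
  refine ⟨![p0, p1, p2], ?_, ?_⟩
  · intro x y hxy
    fin_cases x <;> fin_cases y
    all_goals simp only [Fin.mk_lt_mk] at hxy ⊢
    all_goals first
      | omega
      | exact h01 | exact h12 | exact h02
  · intro x y
    simp only [List.get_eq_getElem] at h1 h2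
    fin_cases x <;> fin_cases y
    all_goals norm_num
    all_goals omega

lemma not_chain_contains {n : ℕ} {w : List ℕ} (hperm : IsPermList n w)
    (hnc : ¬ w.Chain' (fun a b => a ≤ b + 1)) :
    ContainsPat w [2, 3, 1] ∨ ContainsPat w [3, 1, 2] := by
  unfold List.Chain' at hnc
  rw [List.isChain_iff_getElem] at hnc
  push_neg at hnc
  obtain ⟨i, hi, hbad⟩ := hnc
  have hiw : i < w.length := by omega
  have hi1w : i + 1 < w.length := by omega
  set I : Fin w.length := ⟨i, hiw⟩ with hI
  set J : Fin w.length := ⟨i+1, hi1w⟩ with hJ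
  have hbad' : w.get J + 1 < w.get I := hbad
  have hv : w.get J + 1 ∈ w := by
    rw [isPermList_mem hperm]
    have haw : w.get I ∈ w := List.get_mem _ _
    have := (isPermList_mem hperm (w.get I)).1 haw
    omega
  obtain ⟨t, ht⟩ := List.mem_iff_get.1 hv
  have hti : (t : ℕ) ≠ i := fun h => by
    rw [show t = I from Fin.ext (by simp [hI, h])] at ht
    omega
  have hti1 : (t : ℕ) ≠ i + 1 := fun h => by
    rw [show t = J from Fin.ext (by simp [hJ, h])] at ht
    omega
  rcases Nat.lt_or_ge (t : ℕ) i with htlt | htgt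
  · exact Or.inl (contains231 t I J (by simp [Fin.lt_def, hI]; omega)
      (by simp [Fin.lt_def, hI, hJ]) (by omega) (by omega))
  · have htgt' : i + 1 < (t : ℕ) := by omega
    exact Or.inr (contains312 I J t (by simp [Fin.lt_def, hI, hJ])
      (by simp [Fin.lt_def, hJ]; omega) (by omega) (by omega))

lemma isPermList_pos {n : ℕ} {l : List ℕ} (h : IsPermList n l) : ∀ x ∈ l, 0 < x :=
  fun x hx => ((isPermList_mem h x).1 hx).1

lemma stackSort_isPermList {n : ℕ} {l : List ℕ} (h : IsPermList n l) :
    IsPermList n (stackSort l) :=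
  (stackSort_perm (isPermList_pos h)).trans h

lemma stackSort_length {l : List ℕ} (hpos : ∀ x ∈ l, 0 < x) :
    (stackSort l).length = l.length := (stackSort_perm hpos).length_eq

lemma stackSort_ne_nil {n : ℕ} {l : List ℕ} (h : IsPermList n l) (hn : 1 ≤ n) :
    stackSort l ≠ [] := by
  have h1 : (stackSort l).length = n := isPermList_length (stackSort_isPermList h)
  intro hc
  rw [hc] at h1
  simp at h1
  omega

lemma isPermList_ne_nil {n : ℕ} {l : List ℕ} (h : IsPermList n l) (hn : 1 ≤ n) : l ≠ [] := by
  have h1 := isPermList_length h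
  intro hc; rw [hc] at h1; simp at h1; omega

lemma isPermList_max {n : ℕ} {l : List ℕ} (h : IsPermList n l) (hn : 1 ≤ n) :
    l.foldr max 0 = n := by
  apply foldr_max_eq
  · exact (isPermList_mem h n).2 ⟨hn, le_rfl⟩
  · exact fun x hx => ((isPermList_mem h x).1 hx).2

lemma stackSort_getLast_perm {n : ℕ} {l : List ℕ} (h : IsPermList n l) (hn : 1 ≤ n) :
    (stackSort l).getLast? = some n := by
  rw [stackSort_getLast (isPermList_ne_nil h hn) (isPermList_pos h), isPermList_max h hn]

lemma mem_stackSort {l : List ℕ} (hpos : ∀ x ∈ l, 0 < x) {x : ℕ} :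
    x ∈ stackSort l ↔ x ∈ l := (stackSort_perm hpos).mem_iff

lemma isPermList_of_nodup_mem {n : ℕ} {l : List ℕ} (hnd : l.Nodup) (hlen : l.length = n)
    (hmem : ∀ x ∈ l, 1 ≤ x ∧ x ≤ n) : IsPermList n l := by
  rw [IsPermList, List.perm_ext_iff_of_nodup hnd
    (List.Nodup.map (fun a b => by omega) (List.nodup_range))]
  intro a
  simp only [List.mem_map, List.mem_range]
  constructor
  · intro ha
    obtain ⟨h1, h2⟩ := hmem a ha
    exact ⟨a - 1, by omega, by omega⟩
  · rintro ⟨y, hy, rfl⟩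
    by_contra hc
    -- counting argument
    have hsub : l.toFinset ⊆ (Finset.Icc 1 n).erase (y+1) := by
      intro x hx
      rw [List.mem_toFinset] at hx
      obtain ⟨h1, h2⟩ := hmem x hx
      rw [Finset.mem_erase, Finset.mem_Icc]
      exact ⟨fun he => hc (he ▸ hx), h1, h2⟩
    have hcard : l.toFinset.card = n := by rw [List.toFinset_card_of_nodup hnd, hlen]
    have h2 : ((Finset.Icc 1 n).erase (y+1)).card = n - 1 := by
      rw [Finset.card_erase_of_mem (by rw [Finset.mem_Icc]; omega), Nat.card_Icc]
      omega
    have := Finset.card_le_card hsub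
    omega

lemma chain_concat {w : List ℕ} {n : ℕ} (hb : ∀ x ∈ w, x ≤ n + 1)
    (hc : w.Chain' (fun a b => a ≤ b + 1)) : (w ++ [n]).Chain' (fun a b => a ≤ b + 1) := by
  unfold List.Chain' at hc ⊢
  rw [List.isChain_append]
  refine ⟨hc, List.isChain_singleton _, ?_⟩
  intro x hx y hy
  simp only [List.head?_cons, Option.mem_def, Option.some.injEq] at hy
  subst hy
  exact hb x (List.mem_of_mem_getLast? hx)

lemma chain'_map_mem {f : ℕ → ℕ} {w : List ℕ} (hc : w.Chain' (fun a b => a ≤ b + 1))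
    (h : ∀ a ∈ w, ∀ b ∈ w, a ≤ b + 1 → f a ≤ f b + 1) :
    (w.map f).Chain' (fun a b => a ≤ b + 1) := by
  induction w with
  | nil => exact List.isChain_nil
  | cons a w' ih =>
    unfold List.Chain' at hc ih ⊢
    rw [List.map_cons, List.isChain_cons]
    rw [List.isChain_cons] at hc
    constructor
    · intro y hy
      rw [List.head?_map] at hy
      rcases w' with _ | ⟨b, w''⟩
      · simp at hy
      · simp only [List.head?_cons, Option.map_some] at hy
        rw [Option.mem_def, Option.some.injEq] at hy
        subst hy
        exact h a (by simp) b (by simp) (hc.1 b (by simp))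
    · exact ih hc.2 fun x hx y hy hxy =>
        h x (List.mem_cons_of_mem _ hx) y (List.mem_cons_of_mem _ hy) hxy

def ZOF (m i x : ℕ) : ℕ := if x < i then x else x + m

def ZOG (m i x : ℕ) : ℕ := if x ≤ m then x + i - 1 else x + i

lemma ZOF_strictMono {m i : ℕ} : StrictMono (ZOF m i) := by
  intro a b hab
  unfold ZOF
  split_ifs <;> omega

lemma ZOG_strictMono {m i : ℕ} (hi : 1 ≤ i) : StrictMono (ZOG m i) := by
  intro a b hab
  unfold ZOG
  split_ifs <;> omega

def psi : ZOTree → List ℕ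
  | .leaf => [1]
  | .left c => psi c ++ [c.size + 1]
  | .right c => (c.size + 1) :: psi c
  | .both b l r =>
      if b then
        (psi l).map (ZOF (stackSort (psi r)).headI l.size) ++
          (l.size + r.size + 1) :: (psi r).map (ZOG (stackSort (psi r)).headI l.size)
      else
        (psi l).map (ZOF 0 l.size) ++
          (l.size + r.size + 1) :: (psi r).map (ZOG 0 l.size)

lemma ZOTree.size_pos (t : ZOTree) : 1 ≤ t.size := by
  induction t <;> simp [ZOTree.size]

lemma psi_both_spec {i j m : ℕ} {L R : List ℕ} (hi : 1 ≤ i) (hj : 1 ≤ j)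
    (hL : IsPermList i L) (hR : IsPermList j R)
    (hcL : (stackSort L).Chain' (fun a b => a ≤ b + 1))
    (hcR : (stackSort R).Chain' (fun a b => a ≤ b + 1))
    (hhead : m = 0 ∨ (stackSort R).head? = some m) :
    IsPermList (i + j + 1) (L.map (ZOF m i) ++ (i + j + 1) :: R.map (ZOG m i)) ∧
    (stackSort (L.map (ZOF m i) ++ (i + j + 1) :: R.map (ZOG m i))).Chain'
      (fun a b => a ≤ b + 1) := by
  set n := i + j + 1 with hn
  have hsRperm : IsPermList j (stackSort R) := stackSort_isPermList hR
  have hmj : m = 0 ∨ (1 ≤ m ∧ m ≤ j) := by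
    rcases hhead with h | h
    · exact Or.inl h
    · refine Or.inr ((isPermList_mem hsRperm m).1 ?_)
      exact List.mem_of_mem_head? h
  have hmemL : ∀ x, x ∈ L ↔ 1 ≤ x ∧ x ≤ i := isPermList_mem hL
  have hmemR : ∀ x, x ∈ R ↔ 1 ≤ x ∧ x ≤ j := isPermList_mem hR
  -- membership characterizations of the mapped parts
  have hLPmem : ∀ x, x ∈ L.map (ZOF m i) ↔ ((1 ≤ x ∧ x < i) ∨ x = i + m) := by
    intro x
    simp only [List.mem_map]
    constructor
    · rintro ⟨y, hy, rfl⟩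
      obtain ⟨h1, h2⟩ := (hmemL y).1 hy
      unfold ZOF
      split_ifs with h
      · exact Or.inl ⟨h1, h⟩
      · right; omega
    · rintro (⟨h1, h2⟩ | rfl)
      · exact ⟨x, (hmemL x).2 ⟨h1, by omega⟩, by unfold ZOF; split_ifs <;> omega⟩
      · exact ⟨i, (hmemL i).2 ⟨hi, le_rfl⟩, by unfold ZOF; split_ifs <;> omega⟩
  have hRPmem : ∀ x, x ∈ R.map (ZOG m i) ↔ ((i ≤ x ∧ x < i + m) ∨ (i + m < x ∧ x ≤ i + j)) := by
    intro x
    simp only [List.mem_map]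
    constructor
    · rintro ⟨y, hy, rfl⟩
      obtain ⟨h1, h2⟩ := (hmemR y).1 hy
      unfold ZOG
      rcases hmj with rfl | ⟨hm1, hm2⟩
      · right; split_ifs <;> omega
      · split_ifs with h
        · left; omega
        · right; omega
    · rintro (⟨h1, h2⟩ | ⟨h1, h2⟩)
      · refine ⟨x - i + 1, (hmemR _).2 ⟨by omega, by rcases hmj with rfl | hm <;> omega⟩, ?_⟩
        unfold ZOG
        split_ifs <;> omega
      · refine ⟨x - i, (hmemR _).2 ⟨by omega, by omega⟩, ?_⟩
        unfold ZOG
        split_ifs <;> omega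
  have hLPnd : (L.map (ZOF m i)).Nodup :=
    List.Nodup.map (ZOF_strictMono.injective) (isPermList_nodup hL)
  have hRPnd : (R.map (ZOG m i)).Nodup :=
    List.Nodup.map ((ZOG_strictMono hi).injective) (isPermList_nodup hR)
  have hperm : IsPermList n (L.map (ZOF m i) ++ n :: R.map (ZOG m i)) := by
    apply isPermList_of_nodup_mem
    · rw [List.nodup_append]
      refine ⟨hLPnd, ?_, ?_⟩
      · rw [List.nodup_cons]
        refine ⟨fun hc => ?_, hRPnd⟩
        rcases (hRPmem n).1 hc with h | h <;> omega
      · intro x hx _ hx2 rfl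
        rcases List.mem_cons.1 hx2 with heq | hx2
        · rw [heq] at hx
          rcases (hLPmem n).1 hx with h | h <;> omega
        · rcases (hLPmem x).1 hx with h | h <;> rcases (hRPmem x).1 hx2 with h' | h' <;> omega
    · simp only [List.length_append, List.length_cons, List.length_map,
        isPermList_length hL, isPermList_length hR]
      omega
    · intro x hx
      rcases List.mem_append.1 hx with h | h
      · rcases (hLPmem x).1 h with h' | h' <;>
          (constructor <;> first | omega | (rcases hmj with rfl | hm <;> omega))
      · rcases List.mem_cons.1 h with rfl | h'
        · omega
        · rcases (hRPmem x).1 h' with h'' | h'' <;> (constructor <;> omega)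
  refine ⟨hperm, ?_⟩
  -- now the chain condition
  have hLbound : ∀ x ∈ L.map (ZOF m i), 0 < x ∧ x < n := by
    intro x hx
    rcases (hLPmem x).1 hx with h | h <;>
      first | omega | (rcases hmj with rfl | hm <;> omega)
  have hRbound : ∀ x ∈ R.map (ZOG m i), 0 < x ∧ x < n := by
    intro x hx
    rcases (hRPmem x).1 hx with h | h <;> omega
  have hsplit : stackSort (L.map (ZOF m i) ++ n :: R.map (ZOG m i)) =
      stackSort (L.map (ZOF m i)) ++ stackSort (R.map (ZOG m i)) ++ [n] :=
    stackSort_split (by omega) hLbound hRbound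
  rw [hsplit]
  have hsL : stackSort (L.map (ZOF m i)) = (stackSort L).map (ZOF m i) :=
    stackSort_map ZOF_strictMono L
  have hsR : stackSort (R.map (ZOG m i)) = (stackSort R).map (ZOG m i) :=
    stackSort_map (ZOG_strictMono hi) R
  -- chain of left part
  obtain ⟨u, hu⟩ : ∃ u, stackSort L = u ++ [i] :=
    List.getLast?_eq_some_iff.1 (stackSort_getLast_perm hL hi)
  have hsLperm : IsPermList i (stackSort L) := stackSort_isPermList hL
  have hu_lt : ∀ x ∈ u, x < i := by
    intro x hx
    have hmem : x ∈ stackSort L := by rw [hu]; exact List.mem_append_left _ hx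
    have h2 := (isPermList_mem hsLperm x).1 hmem
    have hne : x ≠ i := by
      have hnd := isPermList_nodup hsLperm
      rw [hu, List.nodup_append] at hnd
      intro hc
      exact hnd.2.2 x hx i (by simp) hc
    omega
  have hchainL : ((stackSort L).map (ZOF m i)).Chain' (fun a b => a ≤ b + 1) := by
    rw [hu, List.map_append]
    have hmapu : u.map (ZOF m i) = u := by
      have h1 : u.map (ZOF m i) = u.map id := by
        apply List.map_congr_left
        intro x hx
        unfold ZOF
        rw [if_pos (hu_lt x hx)]
        rfl
      rw [h1, List.map_id]
    rw [hmapu]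
    have : (ZOF m i) i = i + m := by unfold ZOF; simp
    simp only [List.map_cons, List.map_nil, this]
    apply chain_concat
    · intro x hx; have := hu_lt x hx; omega
    · have := hcL
      unfold List.Chain' at this
      rw [hu, List.isChain_append] at this
      exact this.1
  -- chain of right part
  have hchainR : ((stackSort R).map (ZOG m i)).Chain' (fun a b => a ≤ b + 1) := by
    rcases hhead with rfl | hh
    · have : (stackSort R).map (ZOG 0 i) = (stackSort R).map (· + i) := by
        apply List.map_congr_left
        intro x hx
        have := (isPermList_mem hsRperm x).1 hx
        unfold ZOG
        split_ifs <;> omega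
      rw [this]
      exact chain_map_add hcR
    · obtain ⟨v, hv⟩ : ∃ v, stackSort R = m :: v := by
        obtain ⟨a, t, hat⟩ := List.exists_cons_of_ne_nil (stackSort_ne_nil hR hj)
        rw [hat] at hh
        simp only [List.head?_cons, Option.some.injEq] at hh
        exact ⟨t, by rw [hat, hh]⟩
      have hm1 : 1 ≤ m ∧ m ≤ j := by
        rcases hmj with rfl | h
        · have h0 : (0:ℕ) ∈ stackSort R := by
            rw [hv]; exact List.mem_cons_self
          have := (isPermList_mem hsRperm 0).1 h0
          omega
        · exact h
      have hv_ne : ∀ x ∈ v, x ≠ m := by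
        intro x hx
        have hnd := isPermList_nodup hsRperm
        rw [hv, List.nodup_cons] at hnd
        intro hc
        exact hnd.1 (hc ▸ hx)
      rw [hv, List.map_cons]
      unfold List.Chain' at hcR ⊢
      rw [hv, List.isChain_cons] at hcR
      rw [List.isChain_cons]
      constructor
      · intro y hy
        rw [List.head?_map] at hy
        rcases v with _ | ⟨z, v'⟩
        · simp at hy
        · simp only [List.head?_cons, Option.map_some, Option.mem_def,
            Option.some.injEq] at hy
          subst hy
          have hz1 : m ≤ z + 1 := hcR.1 z (by simp)
          have hz2 : z ≠ m := hv_ne z (by simp)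
          unfold ZOG
          split_ifs <;> omega
      · apply chain'_map_mem hcR.2
        intro a ha b hb hab
        have ha' := hv_ne a ha
        have hb' := hv_ne b hb
        unfold ZOG
        split_ifs <;> omega
  -- assemble
  apply chain_concat
  · intro x hx
    rcases List.mem_append.1 hx with h | h
    · rw [hsL] at h
      rw [← hsL] at h
      have := hLbound x ((mem_stackSort (fun x hx => (hLbound x hx).1)).1 h)
      omega
    · have := hRbound x ((mem_stackSort (fun x hx => (hRbound x hx).1)).1 h)
      omega
  · unfold List.Chain'
    rw [hsL, hsR, List.isChain_append]
    refine ⟨hchainL, hchainR, ?_⟩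
    intro x hx y hy
    -- x is the last of left part = i + m, y is head of right part
    have hxval : x = i + m := by
      rw [hu, List.map_append] at hx
      simp only [List.map_cons, List.map_nil] at hx
      rw [List.getLast?_concat] at hx
      have : (ZOF m i) i = i + m := by unfold ZOF; simp
      rw [this] at hx
      simpa using hx.symm
    subst hxval
    rw [List.head?_map] at hy
    rcases hhy : (stackSort R).head? with _ | z
    · rw [hhy] at hy; simp at hy
    · rw [hhy] at hy
      simp only [Option.map_some, Option.mem_def, Option.some.injEq] at hy
      subst hy
      have hz : 1 ≤ z ∧ z ≤ j := (isPermList_mem hsRperm z).1 (List.mem_of_mem_head? hhy)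
      rcases hhead with rfl | hh
      · unfold ZOG; split_ifs <;> omega
      · have : z = m := by rw [hh] at hhy; simpa using hhy.symm
        subst this
        unfold ZOG
        split_ifs <;> omega

lemma psi_spec : ∀ t : ZOTree, IsPermList t.size (psi t) ∧
    (stackSort (psi t)).Chain' (fun a b => a ≤ b + 1) := by
  intro t
  induction t with
  | leaf =>
    constructor
    · show IsPermList 1 [1]
      unfold IsPermList
      simp [List.range_succ]
    · show (stackSort [1]).Chain' _
      have h : stackSort [1] = [1] := rfl
      rw [h]
      exact List.isChain_singleton _
  | left c ih =>
    obtain ⟨ihp, ihc⟩ := ih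
    have hpos := isPermList_pos ihp
    have hL : ∀ x ∈ psi c, 0 < x ∧ x < c.size + 1 := by
      intro x hx
      have := (isPermList_mem ihp x).1 hx
      omega
    have hsplit : stackSort (psi c ++ [c.size + 1]) =
        stackSort (psi c) ++ stackSort [] ++ [c.size + 1] :=
      stackSort_split (by omega) hL (by intro x hx; cases hx)
    constructor
    · show IsPermList (c.size + 1) (psi c ++ [c.size + 1])
      apply isPermList_of_nodup_mem
      · rw [List.nodup_append]
        refine ⟨isPermList_nodup ihp, List.nodup_singleton _, ?_⟩
        intro x hx _ hx2 rfl
        simp only [List.mem_singleton] at hx2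
        subst hx2
        have := hL _ hx
        omega
      · simp [isPermList_length ihp]
      · intro x hx
        rcases List.mem_append.1 hx with h | h
        · have := hL x h; omega
        · simp only [List.mem_singleton] at h; omega
    · show (stackSort (psi c ++ [c.size + 1])).Chain' _
      rw [hsplit]
      have h0 : stackSort [] = [] := rfl
      rw [h0, List.append_nil]
      apply chain_concat
      · intro x hx
        have := hL x ((mem_stackSort hpos).1 hx)
        omega
      · exact ihc
  | right c ih =>
    obtain ⟨ihp, ihc⟩ := ih
    have hpos := isPermList_pos ihp
    have hL : ∀ x ∈ psi c, 0 < x ∧ x < c.size + 1 := by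
      intro x hx
      have := (isPermList_mem ihp x).1 hx
      omega
    have hsplit : stackSort ([] ++ (c.size + 1) :: psi c) =
        stackSort [] ++ stackSort (psi c) ++ [c.size + 1] :=
      stackSort_split (by omega) (by intro x hx; cases hx) hL
    simp only [List.nil_append] at hsplit
    constructor
    · show IsPermList (c.size + 1) ((c.size + 1) :: psi c)
      apply isPermList_of_nodup_mem
      · rw [List.nodup_cons]
        refine ⟨fun hc => ?_, isPermList_nodup ihp⟩
        have := hL _ hc
        omega
      · simp [isPermList_length ihp]
      · intro x hx
        rcases List.mem_cons.1 hx with rfl | h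
        · omega
        · have := hL x h; omega
    · show (stackSort ((c.size + 1) :: psi c)).Chain' _
      rw [hsplit]
      have h0 : stackSort [] = [] := rfl
      rw [h0, List.nil_append]
      apply chain_concat
      · intro x hx
        have := hL x ((mem_stackSort hpos).1 hx)
        omega
      · exact ihc
  | both b l r ihl ihr =>
    obtain ⟨ihlp, ihlc⟩ := ihl
    obtain ⟨ihrp, ihrc⟩ := ihr
    have hi : 1 ≤ l.size := ZOTree.size_pos l
    have hj : 1 ≤ r.size := ZOTree.size_pos r
    cases b
    · have := psi_both_spec (m := 0) hi hj ihlp ihrp ihlc ihrc (Or.inl rfl)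
      show IsPermList (l.size + r.size + 1) (psi (ZOTree.both false l r)) ∧ _
      simpa [psi] using this
    · obtain ⟨a, tl, hat⟩ := List.exists_cons_of_ne_nil (stackSort_ne_nil ihrp hj)
      have hhead : (stackSort (psi r)).head? = some ((stackSort (psi r)).headI) := by
        rw [hat]; rfl
      have := psi_both_spec (m := (stackSort (psi r)).headI) hi hj ihlp ihrp ihlc ihrc
        (Or.inr hhead)
      show IsPermList (l.size + r.size + 1) (psi (ZOTree.both true l r)) ∧ _
      simpa [psi] using this

lemma psi_length (t : ZOTree) : (psi t).length = t.size :=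
  isPermList_length (psi_spec t).1

lemma psi_ne_nil (t : ZOTree) : psi t ≠ [] :=
  isPermList_ne_nil (psi_spec t).1 t.size_pos

lemma mem_psi {t : ZOTree} {x : ℕ} : x ∈ psi t ↔ 1 ≤ x ∧ x ≤ t.size :=
  isPermList_mem (psi_spec t).1 x

lemma size_eq_of_psi_eq {t₁ t₂ : ZOTree} (h : psi t₁ = psi t₂) : t₁.size = t₂.size := by
  have h2 := congrArg List.length h
  rwa [psi_length, psi_length] at h2

lemma psi_headI_bound (t : ZOTree) : 1 ≤ (stackSort (psi t)).headI ∧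
    (stackSort (psi t)).headI ≤ t.size := by
  obtain ⟨a, tl, hat⟩ := List.exists_cons_of_ne_nil
    (stackSort_ne_nil (psi_spec t).1 t.size_pos)
  have : a ∈ stackSort (psi t) := by rw [hat]; exact List.mem_cons_self
  have h2 := (isPermList_mem (stackSort_isPermList (psi_spec t).1) a).1 this
  rw [hat]
  exact h2

lemma mem_map_ZOF {i m : ℕ} {L : List ℕ} (hL : IsPermList i L) (hi : 1 ≤ i) (x : ℕ) :
    x ∈ L.map (ZOF m i) ↔ ((1 ≤ x ∧ x < i) ∨ x = i + m) := by
  have hmemL := isPermList_mem hL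
  simp only [List.mem_map]
  constructor
  · rintro ⟨y, hy, rfl⟩
    obtain ⟨h1, h2⟩ := (hmemL y).1 hy
    unfold ZOF
    split_ifs with h
    · exact Or.inl ⟨h1, h⟩
    · right; omega
  · rintro (⟨h1, h2⟩ | rfl)
    · exact ⟨x, (hmemL x).2 ⟨h1, by omega⟩, by unfold ZOF; split_ifs <;> omega⟩
    · exact ⟨i, (hmemL i).2 ⟨hi, le_rfl⟩, by unfold ZOF; split_ifs <;> omega⟩

lemma mem_map_ZOG {i j m : ℕ} {R : List ℕ} (hR : IsPermList j R) (hi : 1 ≤ i) (hm : m ≤ j)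
    (x : ℕ) : x ∈ R.map (ZOG m i) ↔ ((i ≤ x ∧ x < i + m) ∨ (i + m < x ∧ x ≤ i + j)) := by
  have hmemR := isPermList_mem hR
  simp only [List.mem_map]
  constructor
  · rintro ⟨y, hy, rfl⟩
    obtain ⟨h1, h2⟩ := (hmemR y).1 hy
    unfold ZOG
    split_ifs with h
    · left; omega
    · right; omega
  · rintro (⟨h1, h2⟩ | ⟨h1, h2⟩)
    · refine ⟨x - i + 1, (hmemR _).2 ⟨by omega, by omega⟩, ?_⟩
      unfold ZOG
      split_ifs <;> omega
    · refine ⟨x - i, (hmemR _).2 ⟨by omega, by omega⟩, ?_⟩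
      unfold ZOG
      split_ifs <;> omega

lemma append_cons_inj : ∀ {L₁ : List ℕ} {R₁ L₂ R₂ : List ℕ} {n : ℕ},
    L₁ ++ n :: R₁ = L₂ ++ n :: R₂ → n ∉ L₁ → n ∉ L₂ → L₁ = L₂ ∧ R₁ = R₂ := by
  intro L₁
  induction L₁ with
  | nil =>
    intro R₁ L₂ R₂ n h h1 h2
    cases L₂ with
    | nil => simpa using h
    | cons a t =>
      exfalso
      simp only [List.nil_append, List.cons_append, List.cons.injEq] at h
      exact h2 (h.1 ▸ List.mem_cons_self)
  | cons a t ih =>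
    intro R₁ L₂ R₂ n h h1 h2
    cases L₂ with
    | nil =>
      exfalso
      simp only [List.nil_append, List.cons_append, List.cons.injEq] at h
      exact h1 (h.1 ▸ List.mem_cons_self)
    | cons b t₂ =>
      simp only [List.cons_append, List.cons.injEq] at h
      obtain ⟨rfl, h'⟩ := h
      have := ih h' (fun hc => h1 (List.mem_cons_of_mem _ hc))
        (fun hc => h2 (List.mem_cons_of_mem _ hc))
      exact ⟨by rw [this.1], this.2⟩

lemma not_mem_map_ZOF {i j m : ℕ} {L : List ℕ} (hL : IsPermList i L) (hi : 1 ≤ i)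
    (hm : m ≤ j) : i + j + 1 ∉ L.map (ZOF m i) := by
  rw [mem_map_ZOF hL hi]
  omega

lemma psi_both_true (l r : ZOTree) : psi (ZOTree.both true l r) =
    (psi l).map (ZOF (stackSort (psi r)).headI l.size) ++
      (l.size + r.size + 1) :: (psi r).map (ZOG (stackSort (psi r)).headI l.size) := by
  simp [psi]

lemma psi_both_false (l r : ZOTree) : psi (ZOTree.both false l r) =
    (psi l).map (ZOF 0 l.size) ++
      (l.size + r.size + 1) :: (psi r).map (ZOG 0 l.size) := by
  simp [psi]

lemma psi_both_decomp (b : Bool) (l r : ZOTree) : ∃ m, m ≤ r.size ∧ (b = true → 1 ≤ m) ∧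
    (b = false → m = 0) ∧ psi (ZOTree.both b l r) =
    (psi l).map (ZOF m l.size) ++
      (l.size + r.size + 1) :: (psi r).map (ZOG m l.size) := by
  cases b
  · exact ⟨0, by omega, by simp, by simp, psi_both_false l r⟩
  · exact ⟨(stackSort (psi r)).headI, (psi_headI_bound r).2,
      fun _ => (psi_headI_bound r).1, by simp, psi_both_true l r⟩

lemma psi_inj : ∀ t₁ t₂ : ZOTree, psi t₁ = psi t₂ → t₁ = t₂ := by
  intro t₁
  induction t₁ with
  | leaf =>
    intro t₂ h
    cases t₂ with
    | leaf => rfl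
    | left c =>
      have hsz := size_eq_of_psi_eq h
      have := c.size_pos
      simp [ZOTree.size] at hsz
      omega
    | right c =>
      have hsz := size_eq_of_psi_eq h
      have := c.size_pos
      simp [ZOTree.size] at hsz
      omega
    | both b l r =>
      have hsz := size_eq_of_psi_eq h
      have := l.size_pos
      have := r.size_pos
      simp [ZOTree.size] at hsz
      omega
  | left c ih =>
    intro t₂ h
    cases t₂ with
    | leaf =>
      have hsz := size_eq_of_psi_eq h
      have := c.size_pos
      simp [ZOTree.size] at hsz
      omega
    | left c₂ =>
      have hsz := size_eq_of_psi_eq h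
      simp only [ZOTree.size] at hsz
      change psi c ++ [c.size + 1] = psi c₂ ++ [c₂.size + 1] at h
      rw [show c.size + 1 = c₂.size + 1 from by omega] at h
      have := append_cons_inj h
        (fun hc => by have := mem_psi.1 hc; omega)
        (fun hc => by have := mem_psi.1 hc; omega)
      rw [ih c₂ this.1]
    | right c₂ =>
      exfalso
      have hsz := size_eq_of_psi_eq h
      simp only [ZOTree.size] at hsz
      change psi c ++ [c.size + 1] = (c₂.size + 1) :: psi c₂ at h
      obtain ⟨a, tl, hat⟩ := List.exists_cons_of_ne_nil (psi_ne_nil c)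
      rw [hat, List.cons_append, List.cons.injEq] at h
      have ha : a ∈ psi c := by rw [hat]; exact List.mem_cons_self
      have := mem_psi.1 ha
      omega
    | both b l r =>
      exfalso
      obtain ⟨m, hm, _, _, hdec⟩ := psi_both_decomp b l r
      have hsz := size_eq_of_psi_eq h
      simp only [ZOTree.size] at hsz
      rw [hdec] at h
      change psi c ++ (c.size + 1) :: [] =
        (psi l).map (ZOF m l.size) ++
          (l.size + r.size + 1) :: (psi r).map (ZOG m l.size) at h
      rw [show c.size + 1 = l.size + r.size + 1 from by omega] at h
      have := append_cons_inj h
        (fun hc => by have := mem_psi.1 hc; omega)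
        (not_mem_map_ZOF (psi_spec l).1 l.size_pos hm)
      have h2 := this.2
      exact (psi_ne_nil r) (List.map_eq_nil_iff.1 h2.symm)
  | right c ih =>
    intro t₂ h
    cases t₂ with
    | leaf =>
      have hsz := size_eq_of_psi_eq h
      have := c.size_pos
      simp [ZOTree.size] at hsz
      omega
    | left c₂ =>
      exfalso
      have hsz := size_eq_of_psi_eq h
      simp only [ZOTree.size] at hsz
      change (c.size + 1) :: psi c = psi c₂ ++ [c₂.size + 1] at h
      obtain ⟨a, tl, hat⟩ := List.exists_cons_of_ne_nil (psi_ne_nil c₂)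
      rw [hat, List.cons_append, List.cons.injEq] at h
      have ha : a ∈ psi c₂ := by rw [hat]; exact List.mem_cons_self
      have := mem_psi.1 ha
      omega
    | right c₂ =>
      have hsz := size_eq_of_psi_eq h
      simp only [ZOTree.size] at hsz
      change (c.size + 1) :: psi c = (c₂.size + 1) :: psi c₂ at h
      rw [List.cons.injEq] at h
      rw [ih c₂ h.2]
    | both b l r =>
      exfalso
      obtain ⟨m, hm, _, _, hdec⟩ := psi_both_decomp b l r
      have hsz := size_eq_of_psi_eq h
      simp only [ZOTree.size] at hsz
      rw [hdec] at h
      have h' : ([] : List ℕ) ++ (c.size + 1) :: psi c =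
          (psi l).map (ZOF m l.size) ++ (l.size + r.size + 1) :: (psi r).map (ZOG m l.size) := h
      rw [show c.size + 1 = l.size + r.size + 1 from by omega] at h'
      have := append_cons_inj h' (by simp)
        (not_mem_map_ZOF (psi_spec l).1 l.size_pos hm)
      have h2 := this.1
      exact (psi_ne_nil l) (List.map_eq_nil_iff.1 h2.symm)
  | both b l r ihl ihr =>
    intro t₂ h
    obtain ⟨m, hm, hmb, hmb0, hdec⟩ := psi_both_decomp b l r
    cases t₂ with
    | leaf =>
      have hsz := size_eq_of_psi_eq h
      have := l.size_pos
      have := r.size_pos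
      simp [ZOTree.size] at hsz
      omega
    | left c₂ =>
      exfalso
      have hsz := size_eq_of_psi_eq h
      simp only [ZOTree.size] at hsz
      rw [hdec] at h
      rw [show l.size + r.size + 1 = c₂.size + 1 from by omega] at h
      change (psi l).map (ZOF m l.size) ++ (c₂.size + 1) :: (psi r).map (ZOG m l.size) =
        psi c₂ ++ (c₂.size + 1) :: [] at h
      have := append_cons_inj h
        (by rw [show c₂.size + 1 = l.size + r.size + 1 from by omega]
            exact not_mem_map_ZOF (psi_spec l).1 l.size_pos hm)
        (fun hc => by have := mem_psi.1 hc; omega)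
      exact (psi_ne_nil r) (List.map_eq_nil_iff.1 this.2)
    | right c₂ =>
      exfalso
      have hsz := size_eq_of_psi_eq h
      simp only [ZOTree.size] at hsz
      rw [hdec] at h
      rw [show l.size + r.size + 1 = c₂.size + 1 from by omega] at h
      have h' : (psi l).map (ZOF m l.size) ++ (c₂.size + 1) :: (psi r).map (ZOG m l.size) =
          ([] : List ℕ) ++ (c₂.size + 1) :: psi c₂ := h
      have := append_cons_inj h'
        (by rw [show c₂.size + 1 = l.size + r.size + 1 from by omega]
            exact not_mem_map_ZOF (psi_spec l).1 l.size_pos hm)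
        (by simp)
      exact (psi_ne_nil l) (List.map_eq_nil_iff.1 this.1)
    | both b₂ l₂ r₂ =>
      obtain ⟨m₂, hm₂, hmb₂, hmb0₂, hdec₂⟩ := psi_both_decomp b₂ l₂ r₂
      have hsz := size_eq_of_psi_eq h
      simp only [ZOTree.size] at hsz
      rw [hdec, hdec₂] at h
      rw [show l.size + r.size + 1 = l₂.size + r₂.size + 1 from by omega] at h
      obtain ⟨hLeq, hReq⟩ := append_cons_inj h
        (by rw [show l₂.size + r₂.size + 1 = l.size + r.size + 1 from by omega]
            exact not_mem_map_ZOF (psi_spec l).1 l.size_pos hm)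
        (not_mem_map_ZOF (psi_spec l₂).1 l₂.size_pos hm₂)
      -- equal sizes of left parts
      have hisz : l.size = l₂.size := by
        have := congrArg List.length hLeq
        simpa [psi_length] using this
      -- m = m₂
      have hmm : m = m₂ := by
        have h1 : l.size + m ∈ (psi l).map (ZOF m l.size) :=
          (mem_map_ZOF (psi_spec l).1 l.size_pos _).2 (by right; rfl)
        rw [hLeq] at h1
        have h2 := (mem_map_ZOF (psi_spec l₂).1 l₂.size_pos _).1 h1
        rcases h2 with h2 | h2 <;> omega
      subst hmm
      rw [← hisz] at hLeq hReq
      have hl : psi l = psi l₂ :=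
        (List.map_injective_iff.2 ZOF_strictMono.injective) hLeq
      have hr : psi r = psi r₂ :=
        (List.map_injective_iff.2 (ZOG_strictMono l.size_pos).injective) hReq
      have hb : b = b₂ := by
        cases b <;> cases b₂
        · rfl
        · exfalso
          have e1 := hmb0 rfl
          have e2 := hmb₂ rfl
          omega
        · exfalso
          have e1 := hmb rfl
          have e2 := hmb0₂ rfl
          omega
        · rfl
      rw [ihl l₂ hl, ihr r₂ hr, hb]

lemma psi_surj_aux : ∀ n : ℕ, ∀ p : List ℕ, p.length = n → 1 ≤ n → IsPermList n p →
    (stackSort p).Chain' (fun a b => a ≤ b + 1) → ∃ t : ZOTree, psi t = p := by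
  intro n
  induction n using Nat.strong_induction_on with
  | _ n ih =>
  intro p hlen hn hp hchain
  have hmemp := isPermList_mem hp
  have hndp := isPermList_nodup hp
  -- decompose p = L ++ n :: R
  obtain ⟨L, R, hLR⟩ := List.append_of_mem ((hmemp n).2 ⟨hn, le_rfl⟩)
  have hnd2 : (L ++ n :: R).Nodup := hLR ▸ hndp
  rw [List.nodup_append] at hnd2
  obtain ⟨hndL, hndnR, hdisjL⟩ := hnd2
  have hnnotR : n ∉ R := (List.nodup_cons.1 hndnR).1
  have hndR : R.Nodup := (List.nodup_cons.1 hndnR).2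
  have hnnotL : n ∉ L := fun hc => hdisjL n hc n (List.mem_cons_self) rfl
  have hdisj : ∀ x, x ∈ L → x ∈ R → False := fun x h1 h2 =>
    hdisjL x h1 x (List.mem_cons_of_mem _ h2) rfl
  have hmemL : ∀ x ∈ L, 1 ≤ x ∧ x ≤ n - 1 := by
    intro x hx
    have h1 := (hmemp x).1 (by rw [hLR]; exact List.mem_append_left _ hx)
    have : x ≠ n := fun hc => hnnotL (hc ▸ hx)
    omega
  have hmemR : ∀ x ∈ R, 1 ≤ x ∧ x ≤ n - 1 := by
    intro x hx
    have h1 := (hmemp x).1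
      (by rw [hLR]; exact List.mem_append_right _ (List.mem_cons_of_mem _ hx))
    have : x ≠ n := fun hc => hnnotR (hc ▸ hx)
    omega
  have hsplit : stackSort p = stackSort L ++ stackSort R ++ [n] := by
    rw [hLR]
    exact stackSort_split (by omega) (fun x hx => ⟨(hmemL x hx).1, by have := hmemL x hx; omega⟩)
      (fun x hx => ⟨(hmemR x hx).1, by have := hmemR x hx; omega⟩)
  rw [hsplit] at hchain
  have hchain2 : (stackSort L ++ stackSort R).Chain' (fun a b => a ≤ b + 1) :=
    (List.isChain_append.1 hchain).1
  have hchainL : (stackSort L).Chain' (fun a b => a ≤ b + 1) :=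
    (List.isChain_append.1 hchain2).1
  have hchainR : (stackSort R).Chain' (fun a b => a ≤ b + 1) :=
    (List.isChain_append.1 hchain2).2.1
  have hjun := (List.isChain_append.1 hchain2).2.2
  have hposL : ∀ x ∈ L, 0 < x := fun x hx => (hmemL x hx).1
  have hposR : ∀ x ∈ R, 0 < x := fun x hx => (hmemR x hx).1
  have hlenLR : L.length + R.length + 1 = n := by
    rw [hLR] at hlen
    simp at hlen
    omega
  -- Case R = []
  rcases eq_or_ne R [] with rfl | hRne
  · have hLlen : L.length = n - 1 := by
      simp only [List.length_nil] at hlenLR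
      omega
    rcases eq_or_ne n 1 with rfl | hn1
    · have hL : L = [] := by
        have h0 : L.length = 0 := by omega
        rwa [List.length_eq_zero_iff] at h0
      refine ⟨ZOTree.leaf, ?_⟩
      rw [hLR, hL]
      rfl
    · have hLperm : IsPermList (n-1) L := by
        apply isPermList_of_nodup_mem hndL (by omega)
        exact hmemL
      obtain ⟨c, hc⟩ := ih (n-1) (by omega) L (by omega) (by omega) hLperm hchainL
      refine ⟨ZOTree.left c, ?_⟩
      have hcs : c.size = n - 1 := by rw [← psi_length, hc]; omega
      show psi c ++ [c.size + 1] = p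
      rw [hc, hcs, hLR, show n - 1 + 1 = n from by omega]
  -- Case L = []
  rcases eq_or_ne L [] with rfl | hLne
  · have hRlen : R.length = n - 1 := by
      simp only [List.length_nil] at hlenLR
      omega
    have hRperm : IsPermList (n-1) R := by
      apply isPermList_of_nodup_mem hndR (by omega)
      exact hmemR
    have hn1 : n ≠ 1 := by
      intro hc
      have h0 : R.length = 0 := by omega
      rw [List.length_eq_zero_iff] at h0
      exact hRne h0
    obtain ⟨c, hc⟩ := ih (n-1) (by omega) R (by omega) (by omega) hRperm hchainR
    refine ⟨ZOTree.right c, ?_⟩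
    have hcs : c.size = n - 1 := by rw [← psi_length, hc]; omega
    show (c.size + 1) :: psi c = p
    rw [hc, hcs, hLR, show n - 1 + 1 = n from by omega]
    simp only [List.nil_append]
  -- both nonempty
  set i := L.length with hi
  set j := R.length with hj
  have hi1 : 1 ≤ i := by
    rcases L with _ | _
    · exact absurd rfl hLne
    · simp [hi]
  have hj1 : 1 ≤ j := by
    rcases R with _ | _
    · exact absurd rfl hRne
    · simp [hj]
  set c := L.foldr max 0 with hcdef
  have hcL : c ∈ L := max_mem_of_pos hLne hposL
  have hcmax : ∀ x ∈ L, x ≤ c := fun x hx => foldr_max_le hx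
  have hcb := hmemL c hcL
  have hlastL : (stackSort L).getLast? = some c := stackSort_getLast hLne hposL
  have hsLmem : ∀ x, x ∈ stackSort L ↔ x ∈ L := fun x => mem_stackSort hposL
  have hsRmem : ∀ x, x ∈ stackSort R ↔ x ∈ R := fun x => mem_stackSort hposR
  -- Claim A : every non-max element of L is below every element of R
  have claimA : ∀ a ∈ L, a ≠ c → ∀ b ∈ R, a < b := by
    intro a ha hac b hb
    by_contra hab
    push_neg at hab
    have hba : b < a := by
      rcases Nat.lt_or_ge b a with h | h
      · exact h
      · have : a = b := by omega
        exact absurd (this ▸ hb) (fun hc => hdisj a ha hc)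
    have hchain3 : (stackSort L ++ (stackSort R ++ [n])).Chain' (fun a b => a ≤ b + 1) := by
      rw [← List.append_assoc]
      exact hchain
    have hA : a ∈ stackSort R ++ [n] := by
      apply walk_mem _ _ c b a hchain3 hlastL
        (List.mem_append_left _ ((hsRmem b).2 hb)) (by omega)
        (by have := hcmax a ha; omega)
    rcases List.mem_append.1 hA with h | h
    · exact hdisj a ha ((hsRmem a).1 h)
    · simp only [List.mem_singleton] at h
      have := hmemL a ha
      omega
  -- i ≤ c
  have hicard : i ≤ c := by
    have hsub : L.toFinset ⊆ Finset.Icc 1 c := by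
      intro x hx
      rw [List.mem_toFinset] at hx
      rw [Finset.mem_Icc]
      exact ⟨(hmemL x hx).1, hcmax x hx⟩
    have h1 := Finset.card_le_card hsub
    rw [List.toFinset_card_of_nodup hndL, Nat.card_Icc] at h1
    omega
  -- Claim B : every element of R is ≥ i
  have claimB : ∀ b ∈ R, i ≤ b := by
    intro b hb
    have hsub : L.toFinset.erase c ⊆ Finset.Icc 1 (b - 1) := by
      intro x hx
      rw [Finset.mem_erase, List.mem_toFinset] at hx
      rw [Finset.mem_Icc]
      have := claimA x hx.2 hx.1 b hb
      have := hmemL x hx.2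
      omega
    have h1 := Finset.card_le_card hsub
    rw [Finset.card_erase_of_mem (List.mem_toFinset.2 hcL),
      List.toFinset_card_of_nodup hndL, Nat.card_Icc] at h1
    have hb1 := hmemR b hb
    omega
  -- Claim C : [1, i) ⊆ L
  have claimC : ∀ x, 1 ≤ x → x < i → x ∈ L := by
    intro x h1 h2
    have hin : x ∈ p := (hmemp x).2 ⟨h1, by omega⟩
    rw [hLR] at hin
    rcases List.mem_append.1 hin with h | h
    · exact h
    · rcases List.mem_cons.1 h with rfl | h
      · omega
      · have := claimB x h
        omega
  -- Claim D : x ∈ L ↔ x < i or x = c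
  have claimD : ∀ x, x ∈ L ↔ ((1 ≤ x ∧ x < i) ∨ x = c) := by
    intro x
    constructor
    · intro hx
      rcases eq_or_ne x c with rfl | hxc
      · exact Or.inr rfl
      · left
        refine ⟨(hmemL x hx).1, ?_⟩
        by_contra hxi
        push_neg at hxi
        have hsub : insert x (insert c (Finset.Icc 1 (i-1))) ⊆ L.toFinset := by
          intro y hy
          rw [Finset.mem_insert, Finset.mem_insert, Finset.mem_Icc] at hy
          rw [List.mem_toFinset]
          rcases hy with rfl | rfl | ⟨hy1, hy2⟩
          · exact hx
          · exact hcL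
          · exact claimC y hy1 (by omega)
        have h1 := Finset.card_le_card hsub
        rw [List.toFinset_card_of_nodup hndL] at h1
        rw [Finset.card_insert_of_notMem, Finset.card_insert_of_notMem, Nat.card_Icc] at h1
        · omega
        · rw [Finset.mem_Icc]; omega
        · rw [Finset.mem_insert, Finset.mem_Icc]
          push_neg
          refine ⟨hxc, ?_⟩
          omega
    · rintro (⟨h1, h2⟩ | rfl)
      · exact claimC x h1 h2
      · exact hcL
  rcases eq_or_lt_of_le hicard with hci | hci
  · -- case c = i : label false
    have hLperm : IsPermList i L := isPermList_of_nodup_mem hndL rfl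
      fun x hx => ⟨(hmemL x hx).1, by
        rcases (claimD x).1 hx with h | h <;> omega⟩
    have hmemR2 : ∀ x ∈ R, i + 1 ≤ x ∧ x ≤ n - 1 := by
      intro x hx
      have h1 := claimB x hx
      have h2 := hmemR x hx
      have h3 : x ≠ i := by
        intro hc2
        exact hdisj x ((claimD x).2 (Or.inr (by omega))) hx
      omega
    set R' := R.map (· - i) with hR'
    have hRR' : R'.map (· + i) = R := by
      rw [hR', List.map_map]
      have : R.map ((· + i) ∘ (· - i)) = R.map id := by
        apply List.map_congr_left
        intro x hx
        have := hmemR2 x hx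
        simp only [Function.comp_apply, id_eq]
        omega
      rw [this, List.map_id]
    have hR'perm : IsPermList j R' := by
      apply isPermList_of_nodup_mem
      · apply List.Nodup.map_on _ hndR
        intro x hx y hy hxy
        have := hmemR2 x hx
        have := hmemR2 y hy
        omega
      · rw [hR', List.length_map]
      · intro x hx
        rw [hR', List.mem_map] at hx
        obtain ⟨y, hy, rfl⟩ := hx
        have := hmemR2 y hy
        omega
    have hchainR' : (stackSort R').Chain' (fun a b => a ≤ b + 1) := by
      apply chain_of_chain_map (f := (· + i)) (fun a b hab => by simpa using hab)
      rw [← stackSort_map (fun a b hab => by simpa using hab), hRR']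
      exact hchainR
    obtain ⟨tl, htl⟩ := ih i (by omega) L rfl hi1 hLperm hchainL
    obtain ⟨tr, htr⟩ := ih j (by omega) R' (by rw [hR', List.length_map]) hj1 hR'perm hchainR'
    have htls : tl.size = i := by rw [← psi_length, htl]
    have htrs : tr.size = j := by rw [← psi_length, htr]; rw [hR', List.length_map]
    have e1 : L.map (ZOF 0 i) = L := by
      have h1 : L.map (ZOF 0 i) = L.map id := by
        apply List.map_congr_left
        intro x hx
        unfold ZOF
        split_ifs <;> simp <;> omega
      rw [h1, List.map_id]
    have e2 : R'.map (ZOG 0 i) = R := by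
      rw [← hRR']
      apply List.map_congr_left
      intro x hx
      have hx1 : 1 ≤ x := by
        rw [hR', List.mem_map] at hx
        obtain ⟨y, hy, rfl⟩ := hx
        have := hmemR2 y hy
        omega
      unfold ZOG
      split_ifs <;> omega
    refine ⟨ZOTree.both false tl tr, ?_⟩
    rw [psi_both_false, htl, htr, htls, htrs, e1, e2, hlenLR, hLR]
  · -- case c > i : label true
    set m := c - i with hmdef
    have hm1 : 1 ≤ m := by omega
    -- head of stackSort R is c - 1
    have hsRne : stackSort R ≠ [] := by
      intro hcon
      have := stackSort_length hposR
      rw [hcon] at this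
      simp at this
      omega
    obtain ⟨h0, v, hv⟩ := List.exists_cons_of_ne_nil hsRne
    have hh0R : h0 ∈ R := (hsRmem h0).1 (by rw [hv]; exact List.mem_cons_self)
    have hjun2 : c ≤ h0 + 1 := by
      apply hjun c hlastL h0
      rw [hv]
      simp
    have hh0c : h0 ≠ c := fun hco => hdisj c hcL (hco ▸ hh0R)
    have hc1R : c - 1 ∈ R := by
      have hc1p : c - 1 ∈ p := (hmemp (c-1)).2 ⟨by omega, by omega⟩
      rw [hLR] at hc1p
      rcases List.mem_append.1 hc1p with h | h
      · exfalso
        rcases (claimD (c-1)).1 h with h' | h' <;> omega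
      · rcases List.mem_cons.1 h with h' | h'
        · omega
        · exact h'
    have hh0 : h0 = c - 1 := by
      by_contra hne
      have hh0big : c < h0 := by
        rcases Nat.lt_or_ge h0 c with h | h
        · exfalso
          -- h0 < c, h0 ≥ c - 1 → h0 = c - 1 contradiction with hne
          omega
        · omega
      -- c - 1 is in v
      have hc1v : c - 1 ∈ v := by
        have : c - 1 ∈ stackSort R := (hsRmem _).2 hc1R
        rw [hv] at this
        rcases List.mem_cons.1 this with h | h
        · omega
        · exact h
      have hchain4 : ((stackSort L ++ [h0]) ++ (v ++ [n])).Chain' (fun a b => a ≤ b + 1) := by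
        have : (stackSort L ++ [h0]) ++ (v ++ [n]) = stackSort L ++ stackSort R ++ [n] := by
          rw [hv]
          simp
        rw [this]
        exact hchain
      have hcv : c ∈ v ++ [n] := by
        apply walk_mem _ _ h0 (c-1) c hchain4 (by simp) (List.mem_append_left _ hc1v)
          (by omega) hh0big
      rcases List.mem_append.1 hcv with h | h
      · have : c ∈ R := (hsRmem c).1 (by rw [hv]; exact List.mem_cons_of_mem _ h)
        exact hdisj c hcL this
      · simp only [List.mem_singleton] at h
        omega
    -- characterization of R
    have claimF : ∀ x, x ∈ R ↔ ((i ≤ x ∧ x < c) ∨ (c < x ∧ x ≤ n - 1)) := by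
      intro x
      constructor
      · intro hx
        have h1 := claimB x hx
        have h2 := hmemR x hx
        have h3 : x ≠ c := fun hco => hdisj c hcL (hco ▸ hx)
        omega
      · rintro (⟨h1, h2⟩ | ⟨h1, h2⟩)
        · have hxp : x ∈ p := (hmemp x).2 ⟨by omega, by omega⟩
          rw [hLR] at hxp
          rcases List.mem_append.1 hxp with h | h
          · exfalso
            rcases (claimD x).1 h with h' | h' <;> omega
          · rcases List.mem_cons.1 h with h' | h'
            · omega
            · exact h'
        · have hxp : x ∈ p := (hmemp x).2 ⟨by omega, by omega⟩
          rw [hLR] at hxp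
          rcases List.mem_append.1 hxp with h | h
          · exfalso
            rcases (claimD x).1 h with h' | h' <;> omega
          · rcases List.mem_cons.1 h with h' | h'
            · omega
            · exact h'
    -- define the unrelabeled lists
    set L' := L.map (fun x => if x < i then x else i) with hL'
    set R' := R.map (fun x => if x < c then x - i + 1 else x - i) with hR'
    have hLL' : L'.map (ZOF m i) = L := by
      rw [hL', List.map_map]
      have : L.map ((ZOF m i) ∘ (fun x => if x < i then x else i)) = L.map id := by
        apply List.map_congr_left
        intro x hx
        simp only [Function.comp_apply, id_eq]
        rcases (claimD x).1 hx with h | h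
        · rw [if_pos h.2]
          unfold ZOF
          rw [if_pos h.2]
        · subst h
          rw [if_neg (by omega)]
          unfold ZOF
          rw [if_neg (by omega)]
          omega
      rw [this, List.map_id]
    have hRR' : R'.map (ZOG m i) = R := by
      rw [hR', List.map_map]
      have : R.map ((ZOG m i) ∘ (fun x => if x < c then x - i + 1 else x - i)) = R.map id := by
        apply List.map_congr_left
        intro x hx
        simp only [Function.comp_apply, id_eq]
        rcases (claimF x).1 hx with ⟨h1, h2⟩ | ⟨h1, h2⟩
        · rw [if_pos h2]
          unfold ZOG
          rw [if_pos (by omega)]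
          omega
        · rw [if_neg (by omega)]
          unfold ZOG
          rw [if_neg (by omega)]
          omega
      rw [this, List.map_id]
    have hL'perm : IsPermList i L' := by
      apply isPermList_of_nodup_mem
      · apply List.Nodup.map_on _ hndL
        intro x hx y hy hxy
        rcases (claimD x).1 hx with h | h <;> rcases (claimD y).1 hy with h' | h' <;>
          split_ifs at hxy <;> omega
      · rw [hL', List.length_map]
      · intro x hx
        rw [hL', List.mem_map] at hx
        obtain ⟨y, hy, rfl⟩ := hx
        rcases (claimD y).1 hy with h | h <;> split_ifs <;> omega
    have hR'perm : IsPermList j R' := by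
      apply isPermList_of_nodup_mem
      · apply List.Nodup.map_on _ hndR
        intro x hx y hy hxy
        rcases (claimF x).1 hx with h | h <;> rcases (claimF y).1 hy with h' | h' <;>
          split_ifs at hxy <;> omega
      · rw [hR', List.length_map]
      · intro x hx
        rw [hR', List.mem_map] at hx
        obtain ⟨y, hy, rfl⟩ := hx
        have hcn : c ≤ n - 1 := by omega
        rcases (claimF y).1 hy with h | h <;> split_ifs <;> omega
    have hchainL' : (stackSort L').Chain' (fun a b => a ≤ b + 1) := by
      apply chain_of_chain_map (f := ZOF m i) ZOF_strictMono
      rw [← stackSort_map ZOF_strictMono, hLL']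
      exact hchainL
    have hchainR' : (stackSort R').Chain' (fun a b => a ≤ b + 1) := by
      apply chain_of_chain_map (f := ZOG m i) (ZOG_strictMono hi1)
      rw [← stackSort_map (ZOG_strictMono hi1), hRR']
      exact hchainR
    obtain ⟨tl, htl⟩ := ih i (by omega) L' (by rw [hL', List.length_map]) hi1 hL'perm hchainL'
    obtain ⟨tr, htr⟩ := ih j (by omega) R' (by rw [hR', List.length_map]) hj1 hR'perm hchainR'
    have htls : tl.size = i := by rw [← psi_length, htl, hL', List.length_map]
    have htrs : tr.size = j := by rw [← psi_length, htr, hR', List.length_map]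
    -- head of stackSort R' is m
    have hheadR' : (stackSort R').headI = m := by
      have hmap : stackSort R = (stackSort R').map (ZOG m i) := by
        rw [← stackSort_map (ZOG_strictMono hi1), hRR']
      obtain ⟨z, v', hv'⟩ := List.exists_cons_of_ne_nil
        (stackSort_ne_nil hR'perm hj1)
      have heads : h0 :: v = (ZOG m i z) :: v'.map (ZOG m i) := by
        rw [← hv, hmap, hv', List.map_cons]
      injection heads with h1 _
      have hzmem : z ∈ R' := by
        rw [← (mem_stackSort (isPermList_pos hR'perm) (x := z))]
        rw [hv']
        exact List.mem_cons_self
      have hzb := (isPermList_mem hR'perm z).1 hzmem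
      rw [hv']
      show z = m
      unfold ZOG at h1
      split_ifs at h1 <;> omega
    refine ⟨ZOTree.both true tl tr, ?_⟩
    rw [psi_both_true, htl, htr, htls, htrs, hheadR', hLL', hRR', hlenLR, hLR]

lemma psi_surj {n : ℕ} {p : List ℕ} (hn : 1 ≤ n) (hp : IsPermList n p)
    (hc : (stackSort p).Chain' (fun a b => a ≤ b + 1)) : ∃ t : ZOTree, psi t = p :=
  psi_surj_aux n p (isPermList_length hp) hn hp hc

lemma psi_good (t : ZOTree) :
    AvoidsPat (stackSort (psi t)) [2, 3, 1] ∧ AvoidsPat (stackSort (psi t)) [3, 1, 2] :=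
  chain_avoids (isPermList_nodup (stackSort_isPermList (psi_spec t).1)) (psi_spec t).2

lemma good_of_avoids {n : ℕ} {p : List ℕ} (hp : IsPermList n p)
    (h1 : AvoidsPat (stackSort p) [2, 3, 1]) (h2 : AvoidsPat (stackSort p) [3, 1, 2]) :
    (stackSort p).Chain' (fun a b => a ≤ b + 1) := by
  by_contra hnc
  rcases not_chain_contains (stackSort_isPermList hp) hnc with h | h
  exacts [h1 h, h2 h]

lemma psi_isPermList_of_size {t : ZOTree} {n : ℕ} (h : t.size = n) :
    IsPermList n (psi t) := by
  subst h
  exact (psi_spec t).1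

/-- for every `n ≥ 1`, `|s⁻¹(Av_n(231, 312))| = a n`, the number of
0-1-trees on `n` vertices. -/
theorem preimage_av231_312_eq_zotree_count :
    ∀ n : ℕ, 1 ≤ n →
      Nat.card {p : List ℕ // IsPermList n p ∧
          AvoidsPat (stackSort p) [2, 3, 1] ∧ AvoidsPat (stackSort p) [3, 1, 2]} =
        countZOTrees n := by
  intro n hn
  have hbij : Function.Bijective (fun t : {t : ZOTree // t.size = n} =>
      (⟨psi t.1, psi_isPermList_of_size t.2,
        (psi_good t.1).1, (psi_good t.1).2⟩ :
        {p : List ℕ // IsPermList n p ∧ AvoidsPat (stackSort p) [2, 3, 1] ∧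
          AvoidsPat (stackSort p) [3, 1, 2]})) := by
    constructor
    · intro a b hab
      apply Subtype.ext
      exact psi_inj _ _ (congrArg Subtype.val hab)
    · rintro ⟨p, hp, h1, h2⟩
      have hc : (stackSort p).Chain' (fun a b => a ≤ b + 1) := good_of_avoids hp h1 h2
      obtain ⟨t, ht⟩ := psi_surj hn hp hc
      have hts : t.size = n := by rw [← psi_length, ht, isPermList_length hp]
      exact ⟨⟨t, hts⟩, Subtype.ext ht⟩
  rw [countZOTrees]
  exact (Nat.card_eq_of_bijective _ hbij).symm
end
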